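/- arXiv:1605.06599 — 9 statements merged into one kernel-verified Lean document; each statement's English description precedes it below -/
import Mathlib

section
/- Let M > 0 and let ã : ℝ³ → ℝ satisfy ‖ã‖_{W^{2,∞}(ℝ³)} ≤ M. Then for every σ > 0 the regularization a_σ is differentiable on ℝ³, and there exists a constant C > 0, depending only on M and χ, such that for every σ > 0 and every x ∈ ℝ³ one has |∇a_σ(x) − ∇ã(x)| ≤ C σ^{−1/3}. -/
open MeasureTheory
open MeasureTheory InnerProductSpace Metric
open scoped RealInnerProductSpace

set_option maxHeartbeats 2000000


local notation "E3" => EuclideanSpace ℝ (Fin 3)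

lemma aux_int {F : Type*} [NormedAddCommGroup F] {g : E3 → F}
    (hg : Continuous g) (x₀ : E3) (r : ℝ) (hvan : ∀ y, y ∉ Metric.closedBall x₀ r → g y = 0) :
    Integrable g :=
  hg.integrable_of_hasCompactSupport (HasCompactSupport.intro (isCompact_closedBall x₀ r) hvan)

lemma aux_cov {F : Type*} [NormedAddCommGroup F] [NormedSpace ℝ F]
    (f : E3 → F) (x : E3) {s : ℝ} (hs : 0 < s) :
    ∫ y : E3, f (s • (x - y)) = (s ^ 3)⁻¹ • ∫ z, f z := by
  have h1 : ∫ y : E3, f (s • (x - y)) = ∫ y : E3, (fun z : E3 => f (s • z)) (x - y) := rfl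
  rw [h1, integral_sub_left_eq_self (fun z : E3 => f (s • z)) volume x,
    Measure.integral_comp_smul volume f s, finrank_euclideanSpace_fin,
    abs_of_nonneg (by positivity)]

lemma aux_fderiv_zero (χ : E3 → ℝ) (hχ : ContDiff ℝ (⊤ : ℕ∞) χ) (hcs : HasCompactSupport χ) :
    ∫ z, fderiv ℝ χ z = 0 := by
  have hL_cont : Continuous (fderiv ℝ χ) := hχ.continuous_fderiv (by simp)
  have hL_cs : HasCompactSupport (fderiv ℝ χ) := hcs.fderiv (𝕜 := ℝ)
  have hint : Integrable (fderiv ℝ χ) := hL_cont.integrable_of_hasCompactSupport hL_cs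
  ext v
  rw [ContinuousLinearMap.integral_apply hint v]
  have h1 : Integrable (fun z : E3 => fderiv ℝ χ z v * (fun _ : E3 => (1:ℝ)) z) := by
    simp only [mul_one]
    exact ((ContinuousLinearMap.apply ℝ ℝ v).continuous.comp
      hL_cont).integrable_of_hasCompactSupport
      (hL_cs.comp_left (g := fun L : E3 →L[ℝ] ℝ => L v) rfl)
  have h2 : Integrable (fun z : E3 => χ z * fderiv ℝ (fun _ : E3 => (1:ℝ)) z v) := by
    simp [fderiv_const]
  have h3 : Integrable (fun z : E3 => χ z * (fun _ : E3 => (1:ℝ)) z) := by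
    simpa using hχ.continuous.integrable_of_hasCompactSupport hcs
  have := integral_mul_fderiv_eq_neg_fderiv_mul_of_integrable h1 h2 h3
    (fun x _ => hχ.differentiable (by simp) x) (fun x _ => differentiable_const (1:ℝ) x)
  simp only [fderiv_fun_const, Pi.zero_apply, ContinuousLinearMap.zero_apply, mul_zero,
    integral_zero, mul_one] at this
  have h4 : ∫ z : E3, fderiv ℝ χ z v = 0 := by linarith [this.symm]
  simpa using h4

/-- The regularization `a_σ` of a function `a : ℝ³ → ℝ`, built from the mollifier
`χ_σ(x) = σ χ(σ^{1/3} x)`: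
`a_σ(x) = ∫ χ_σ(x − y) (a(y) + (x − y)·∇a(y)) dy`. -/
noncomputable def reg (χ a : EuclideanSpace ℝ (Fin 3) → ℝ) (σ : ℝ)
    (x : EuclideanSpace ℝ (Fin 3)) : ℝ :=
  ∫ y : EuclideanSpace ℝ (Fin 3),
    (σ * χ ((σ ^ ((1:ℝ)/3)) • (x - y))) * (a y + ⟪x - y, gradient a y⟫)

theorem stmt1
    (χ : EuclideanSpace ℝ (Fin 3) → ℝ)
    (hχ_smooth : ContDiff ℝ (⊤ : ℕ∞) χ)
    (hχ_nonneg : ∀ x, 0 ≤ χ x)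
    (hχ_supp : ∀ x, 1 < ‖x‖ → χ x = 0)
    (hχ_int : ∫ x, χ x = 1)
    (M : ℝ) (hM : 0 < M)
    (a : EuclideanSpace ℝ (Fin 3) → ℝ)
    (ha_diff : ∀ x, DifferentiableAt ℝ a x)
    (ha_bd : ∀ x, |a x| ≤ M)
    (hgrad_bd : ∀ x, ‖gradient a x‖ ≤ M)
    (hgrad_lip : LipschitzWith M.toNNReal (gradient a)) :
    (∀ σ > 0, ∀ x : EuclideanSpace ℝ (Fin 3), DifferentiableAt ℝ (reg χ a σ) x) ∧
    ∃ C > 0, ∀ σ > 0, ∀ x : EuclideanSpace ℝ (Fin 3),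
      ‖gradient (reg χ a σ) x - gradient a x‖ ≤ C * σ ^ (-(1:ℝ)/3) := by
  classical
  -- basic continuity facts
  have hχ_cont : Continuous χ := hχ_smooth.continuous
  have hχ_diff : Differentiable ℝ χ := hχ_smooth.differentiable (by simp)
  set L : E3 → (E3 →L[ℝ] ℝ) := fderiv ℝ χ with hLdef
  have hL_cont : Continuous L := hχ_smooth.continuous_fderiv (by simp)
  have hχ_cs : HasCompactSupport χ := by
    refine HasCompactSupport.intro (isCompact_closedBall (0:E3) 1) fun x hx => hχ_supp x ?_
    simpa [mem_closedBall, dist_zero_right, not_le] using hx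
  have hL_supp : ∀ z : E3, 1 < ‖z‖ → L z = 0 := by
    intro z hz
    have hopen : IsOpen {w : E3 | 1 < ‖w‖} := isOpen_lt continuous_const continuous_norm
    have hev : χ =ᶠ[nhds z] (fun _ => (0:ℝ)) :=
      Filter.eventuallyEq_iff_exists_mem.2 ⟨_, hopen.mem_nhds hz, fun w hw => hχ_supp w hw⟩
    rw [hLdef]
    rw [hev.fderiv_eq, fderiv_fun_const]
    rfl
  have hL0 : ∫ z, L z = 0 := aux_fderiv_zero χ hχ_smooth hχ_cs
  set K : ℝ := ∫ z, ‖L z‖ with hKdef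
  have hK0 : 0 ≤ K := integral_nonneg fun z => norm_nonneg _
  have ha_cont : Continuous a := by
    have : Differentiable ℝ a := fun x => ha_diff x
    exact this.continuous
  have hG_cont : Continuous (gradient a) := hgrad_lip.continuous
  have hG_lip : ∀ u v : E3, ‖gradient a u - gradient a v‖ ≤ M * ‖u - v‖ := by
    intro u v
    have := hgrad_lip.dist_le_mul u v
    rwa [dist_eq_norm, dist_eq_norm, Real.coe_toNNReal _ hM.le] at this
  have hfd : ∀ y : E3, HasFDerivAt a (toDual ℝ E3 (gradient a y)) y :=
    fun y => (ha_diff y).hasGradientAt.hasFDerivAt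
  -- derivative of the linear part
  have hinner_deriv : ∀ (y u : E3),
      HasFDerivAt (fun w : E3 => ⟪w - y, gradient a y⟫) (toDual ℝ E3 (gradient a y)) u := by
    intro y u
    have h0 : (fun w : E3 => ⟪w - y, gradient a y⟫)
        = fun w : E3 => (toDual ℝ E3 (gradient a y)) w - (toDual ℝ E3 (gradient a y)) y := by
      funext w
      rw [real_inner_comm, ← map_sub, toDual_apply_apply]
    rw [h0]
    exact (toDual ℝ E3 (gradient a y)).hasFDerivAt.sub_const _
  -- Taylor estimate
  have htaylor : ∀ y w : E3, |a w - (a y + ⟪w - y, gradient a y⟫)| ≤ M * ‖w - y‖ ^ 2 := by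
    intro y w
    set r := ‖w - y‖ with hrdef
    have hderivs : ∀ u ∈ closedBall y r,
        HasFDerivWithinAt (fun u : E3 => a u - ⟪u - y, gradient a y⟫)
          ((toDual ℝ E3 (gradient a u)) - toDual ℝ E3 (gradient a y)) (closedBall y r) u :=
      fun u _ => ((hfd u).sub (hinner_deriv y u)).hasFDerivWithinAt
    have hbnd : ∀ u ∈ closedBall y r,
        ‖(toDual ℝ E3 (gradient a u)) - toDual ℝ E3 (gradient a y)‖ ≤ M * r := by
      intro u hu
      rw [← map_sub, LinearIsometryEquiv.norm_map]
      refine (hG_lip u y).trans (mul_le_mul_of_nonneg_left ?_ hM.le)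
      simpa [mem_closedBall, dist_eq_norm] using hu
    have hkey := (convex_closedBall y r).norm_image_sub_le_of_norm_hasFDerivWithin_le hderivs hbnd
      (mem_closedBall_self (norm_nonneg _))
      (show w ∈ closedBall y r by simp [mem_closedBall, dist_eq_norm, hrdef])
    have h2 : (a w - ⟪w - y, gradient a y⟫) - (a y - ⟪y - y, gradient a y⟫)
        = a w - (a y + ⟪w - y, gradient a y⟫) := by
      simp only [sub_self, inner_zero_left]
      ring
    rw [Real.norm_eq_abs, h2] at hkey
    calc |a w - (a y + ⟪w - y, gradient a y⟫)| ≤ M * r * ‖w - y‖ := hkey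
    _ = M * ‖w - y‖ ^ 2 := by rw [hrdef]; ring
  -- bounds on χ and L
  obtain ⟨Cχ, hCχ⟩ := hχ_cs.exists_bound_of_continuous hχ_cont
  obtain ⟨CL, hCL⟩ := (hχ_cs.fderiv (𝕜 := ℝ)).exists_bound_of_continuous hL_cont
  have hCχ0 : 0 ≤ Cχ := le_trans (norm_nonneg _) (hCχ 0)
  have hCL0 : 0 ≤ CL := le_trans (norm_nonneg _) (hCL 0)
  -- main step
  have main : ∀ σ : ℝ, 0 < σ → ∀ x₀ : E3, ∃ Φ : E3 →L[ℝ] ℝ,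
      HasFDerivAt (reg χ a σ) Φ x₀ ∧
      ‖Φ - toDual ℝ E3 (gradient a x₀)‖ ≤ (M * (1 + K)) * (σ ^ ((1:ℝ)/3))⁻¹ := by
    intro σ hσ x₀
    set s : ℝ := σ ^ ((1:ℝ)/3) with hsdef
    have hs : 0 < s := Real.rpow_pos_of_pos hσ _
    have hs3 : s ^ 3 = σ := by
      rw [hsdef, ← Real.rpow_natCast (σ ^ ((1:ℝ)/3)) 3, ← Real.rpow_mul hσ.le]
      norm_num
    have hsLz : ∀ z : E3, ‖s • L z‖ ≤ s * ‖L z‖ := fun z => by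
      refine (norm_smul_le s (L z)).trans ?_
      rw [Real.norm_eq_abs, abs_of_pos hs]
    have hσsLz : ∀ z : E3, ‖σ • s • L z‖ ≤ σ * (s * ‖L z‖) := fun z => by
      refine (norm_smul_le σ (s • L z)).trans ?_
      rw [Real.norm_eq_abs, abs_of_pos hσ]
      exact mul_le_mul_of_nonneg_left (hsLz z) hσ.le
    -- the integrand and its derivative in x
    set F : E3 → E3 → ℝ := fun x y => (σ * χ (s • (x - y))) * (a y + ⟪x - y, gradient a y⟫)
      with hFdef
    set F' : E3 → E3 → (E3 →L[ℝ] ℝ) := fun x y =>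
      (σ * χ (s • (x - y))) • toDual ℝ E3 (gradient a y)
        + (a y + ⟪x - y, gradient a y⟫) • (σ • (s • L (s • (x - y)))) with hF'def
    -- vanishing outside balls
    have hvan : ∀ (x y : E3), s⁻¹ < ‖x - y‖ → χ (s • (x - y)) = 0 ∧ L (s • (x - y)) = 0 := by
      intro x y h
      have hn : 1 < ‖s • (x - y)‖ := by
        rw [norm_smul, Real.norm_eq_abs, abs_of_pos hs]
        calc (1:ℝ) = s * s⁻¹ := by field_simp
        _ < s * ‖x - y‖ := by exact mul_lt_mul_of_pos_left h hs
      exact ⟨hχ_supp _ hn, hL_supp _ hn⟩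
    -- differentiability of F in x
    have hFderiv : ∀ (y : E3) (x : E3), HasFDerivAt (fun x => F x y) (F' x y) x := by
      intro y x
      have hlin : HasFDerivAt (fun x : E3 => s • (x - y)) (s • (ContinuousLinearMap.id ℝ E3)) x :=
        ((hasFDerivAt_id x).sub_const y).const_smul s
      have hc : HasFDerivAt (fun x : E3 => χ (s • (x - y)))
          ((L (s • (x - y))).comp (s • ContinuousLinearMap.id ℝ E3)) x :=
        ((hχ_diff _).hasFDerivAt).comp x hlin
      have hcomp : (L (s • (x - y))).comp (s • ContinuousLinearMap.id ℝ E3)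
          = s • L (s • (x - y)) := by
        ext v; simp
      have hc2 : HasFDerivAt (fun x : E3 => σ * χ (s • (x - y))) (σ • (s • L (s • (x - y)))) x := by
        have := hc.const_mul σ
        rwa [hcomp] at this
      have hd : HasFDerivAt (fun x : E3 => a y + ⟪x - y, gradient a y⟫)
          (toDual ℝ E3 (gradient a y)) x :=
        (hinner_deriv y x).const_add (a y)
      exact hc2.mul hd
    have hcont_smul : Continuous (fun y : E3 => s • (x₀ - y)) :=
      (continuous_const.sub continuous_id).const_smul s
    have hχcomp_cont : Continuous (fun y : E3 => χ (s • (x₀ - y))) := hχ_cont.comp hcont_smul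
    have hLcomp_cont : Continuous (fun y : E3 => L (s • (x₀ - y))) := hL_cont.comp hcont_smul
    have hsum_cont : Continuous (fun y : E3 => a y + ⟪x₀ - y, gradient a y⟫) :=
      ha_cont.add (Continuous.inner (continuous_const.sub continuous_id) hG_cont)
    have hb_cont_fun : ∀ x : E3, Continuous (fun y => F x y) := by
      intro x
      exact (continuous_const.mul
          (hχ_cont.comp ((continuous_const.sub continuous_id).const_smul s))).mul
        (ha_cont.add (Continuous.inner (continuous_const.sub continuous_id) hG_cont))
    have hnotin : ∀ y : E3, y ∉ closedBall x₀ s⁻¹ → s⁻¹ < ‖x₀ - y‖ := by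
      intro y hy
      have : s⁻¹ < dist y x₀ := not_le.mp (by simpa [mem_closedBall] using hy)
      rwa [dist_eq_norm, ← norm_sub_rev] at this
    have hFint : Integrable (fun y => F x₀ y) := by
      refine aux_int (hb_cont_fun x₀) x₀ s⁻¹ fun y hy => ?_
      have h := (hvan x₀ y (hnotin y hy)).1
      simp only [hFdef, h, mul_zero, zero_mul]
    have hF'cont : Continuous (fun y => F' x₀ y) := by
      refine Continuous.add ?_ ?_
      · exact (continuous_const.mul hχcomp_cont).smul
          ((toDual ℝ E3).continuous.comp hG_cont)
      · exact hsum_cont.smul ((hLcomp_cont.const_smul s).const_smul σ)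
    have hΦ : HasFDerivAt (fun x => ∫ y, F x y) (∫ y, F' x₀ y) x₀ := by
      set B : ℝ := σ * Cχ * M + (M + (s⁻¹ + 2) * M) * (σ * (s * CL)) with hBdef
      set bound : E3 → ℝ := (closedBall x₀ (s⁻¹ + 1)).indicator (fun _ => B) with hbounddef
      have h_bound : ∀ y : E3, ∀ x ∈ ball x₀ 1, ‖F' x y‖ ≤ bound y := by
        intro y x hx
        by_cases hy : y ∈ closedBall x₀ (s⁻¹ + 1)
        · rw [hbounddef, Set.indicator_of_mem hy]
          have hxy : ‖x - y‖ ≤ s⁻¹ + 2 := by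
            have h1 : dist x x₀ < 1 := mem_ball.mp hx
            have h2 : dist x₀ y ≤ s⁻¹ + 1 := by
              rw [dist_comm]; exact mem_closedBall.mp hy
            calc ‖x - y‖ = dist x y := (dist_eq_norm _ _).symm
            _ ≤ dist x x₀ + dist x₀ y := dist_triangle _ _ _
            _ ≤ 1 + (s⁻¹ + 1) := add_le_add h1.le h2
            _ = s⁻¹ + 2 := by ring
          have step1 : ‖F' x y‖ ≤ (σ * |χ (s • (x - y))|) * ‖gradient a y‖
              + (|a y| + ‖x - y‖ * ‖gradient a y‖) * (σ * (s * ‖L (s • (x - y))‖)) := by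
            refine le_trans (norm_add_le _ _) (add_le_add ?_ ?_)
            · refine (norm_smul_le (σ * χ (s • (x - y))) ((toDual ℝ E3) (gradient a y))).trans ?_
              have n1 : ‖(toDual ℝ E3) (gradient a y)‖ = ‖gradient a y‖ :=
                (toDual ℝ E3).norm_map _
              rw [n1, Real.norm_eq_abs, abs_mul, abs_of_pos hσ]
            · refine (norm_smul_le (a y + ⟪x - y, gradient a y⟫) (σ • s • L (s • (x - y)))).trans ?_
              have hψ : ‖a y + ⟪x - y, gradient a y⟫‖ ≤ |a y| + ‖x - y‖ * ‖gradient a y‖ := by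
                rw [Real.norm_eq_abs]
                exact (abs_add_le _ _).trans (add_le_add le_rfl (abs_real_inner_le_norm _ _))
              exact mul_le_mul hψ (hσsLz _) (norm_nonneg _) (by positivity)
          have step2 : (σ * |χ (s • (x - y))|) * ‖gradient a y‖
              + (|a y| + ‖x - y‖ * ‖gradient a y‖) * (σ * (s * ‖L (s • (x - y))‖))
              ≤ (σ * Cχ) * M + (M + (s⁻¹ + 2) * M) * (σ * (s * CL)) := by
            have e1 : |χ (s • (x - y))| ≤ Cχ := by rw [← Real.norm_eq_abs]; exact hCχ _
            have e2 : ‖gradient a y‖ ≤ M := hgrad_bd y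
            have e3 : |a y| ≤ M := ha_bd y
            have e4 : ‖L (s • (x - y))‖ ≤ CL := hCL _
            gcongr
          refine (step1.trans step2).trans (le_of_eq ?_)
          rw [hBdef]
        · rw [hbounddef, Set.indicator_of_notMem hy]
          have hdist : s⁻¹ < ‖x - y‖ := by
            have h1 : s⁻¹ + 1 < dist y x₀ := not_le.mp (by simpa [mem_closedBall] using hy)
            have h2 : dist x x₀ < 1 := mem_ball.mp hx
            have : s⁻¹ < dist y x := by
              have := dist_triangle y x x₀
              linarith
            rwa [dist_comm, dist_eq_norm] at this
          have hv := hvan x y hdist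
          have hz : F' x y = 0 := by
            show (σ * χ (s • (x - y))) • (toDual ℝ E3) (gradient a y)
              + (a y + ⟪x - y, gradient a y⟫) • σ • s • L (s • (x - y)) = 0
            rw [hv.1, hv.2]
            simp
          rw [hz, norm_zero]
      have hbound_int : Integrable bound := by
        rw [hbounddef, integrable_indicator_iff measurableSet_closedBall]
        exact integrableOn_const measure_closedBall_lt_top.ne
      exact hasFDerivAt_integral_of_dominated_of_fderiv_le (ball_mem_nhds x₀ one_pos)
        (Filter.Eventually.of_forall fun x => (hb_cont_fun x).aestronglyMeasurable)
        hFint hF'cont.aestronglyMeasurable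
        (Filter.Eventually.of_forall fun y x hx => h_bound y x hx)
        hbound_int
        (Filter.Eventually.of_forall fun y x _ => hFderiv y x)
    -- integral identities
    have hI1 : ∫ y : E3, σ * χ (s • (x₀ - y)) = 1 := by
      have := aux_cov (fun z => σ * χ z) x₀ hs
      rw [this, integral_const_mul, hχ_int, hs3]
      field_simp
      simp [hσ.ne']
    have hIK : ∫ y : E3, σ * ‖L (s • (x₀ - y))‖ = K := by
      have := aux_cov (fun z => σ * ‖L z‖) x₀ hs
      rw [this, integral_const_mul, hs3, smul_eq_mul]
      rw [hKdef]; field_simp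
    have hI0 : ∫ y : E3, L (s • (x₀ - y)) = 0 := by
      rw [aux_cov L x₀ hs, hL0, smul_zero]
    have hest : ‖(∫ y, F' x₀ y) - toDual ℝ E3 (gradient a x₀)‖
        ≤ (M * (1 + K)) * s⁻¹ := by
      have hT2int : Integrable (fun y : E3 =>
          (σ * χ (s • (x₀ - y))) • toDual ℝ E3 (gradient a y)) := by
        refine aux_int ((continuous_const.mul hχcomp_cont).smul
          ((toDual ℝ E3).continuous.comp hG_cont)) x₀ s⁻¹ fun y hy => ?_
        simp [(hvan x₀ y (hnotin y hy)).1]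
      have hT1int : Integrable (fun y : E3 =>
          (a y + ⟪x₀ - y, gradient a y⟫) • (σ • (s • L (s • (x₀ - y))))) := by
        refine aux_int (hsum_cont.smul
          ((hLcomp_cont.const_smul s).const_smul σ)) x₀ s⁻¹ fun y hy => ?_
        simp [(hvan x₀ y (hnotin y hy)).2]
      have hI1int : Integrable (fun y : E3 => σ * χ (s • (x₀ - y))) := by
        refine aux_int (continuous_const.mul hχcomp_cont) x₀ s⁻¹ fun y hy => ?_
        simp [(hvan x₀ y (hnotin y hy)).1]
      have hIKint : Integrable (fun y : E3 => σ * ‖L (s • (x₀ - y))‖) := by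
        refine aux_int (continuous_const.mul hLcomp_cont.norm) x₀ s⁻¹ fun y hy => ?_
        simp [(hvan x₀ y (hnotin y hy)).2]
      have hLcomp_int : Integrable (fun y : E3 => L (s • (x₀ - y))) := by
        refine aux_int hLcomp_cont x₀ s⁻¹ fun y hy => ?_
        exact (hvan x₀ y (hnotin y hy)).2
      have hsplit : (∫ y, F' x₀ y)
          = (∫ y : E3, (σ * χ (s • (x₀ - y))) • toDual ℝ E3 (gradient a y))
            + ∫ y : E3, (a y + ⟪x₀ - y, gradient a y⟫) • (σ • (s • L (s • (x₀ - y)))) :=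
        integral_add hT2int hT1int
      have hU_eq : ∫ y : E3, (σ * χ (s • (x₀ - y))) •
            (toDual ℝ E3 (gradient a y) - toDual ℝ E3 (gradient a x₀))
          = (∫ y : E3, (σ * χ (s • (x₀ - y))) • toDual ℝ E3 (gradient a y))
            - toDual ℝ E3 (gradient a x₀) := by
        have h1 : Integrable (fun y : E3 =>
            (σ * χ (s • (x₀ - y))) • toDual ℝ E3 (gradient a x₀)) := hI1int.smul_const _
        have h2 : (fun y : E3 => (σ * χ (s • (x₀ - y))) •
              (toDual ℝ E3 (gradient a y) - toDual ℝ E3 (gradient a x₀)))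
            = fun y : E3 => (σ * χ (s • (x₀ - y))) • toDual ℝ E3 (gradient a y)
              - (σ * χ (s • (x₀ - y))) • toDual ℝ E3 (gradient a x₀) :=
          funext fun y => smul_sub _ _ _
        rw [h2, integral_sub hT2int h1, integral_smul_const, hI1, one_smul]
      have hV_eq : ∫ y : E3, ((a y + ⟪x₀ - y, gradient a y⟫) - a x₀) •
            (σ • (s • L (s • (x₀ - y))))
          = ∫ y : E3, (a y + ⟪x₀ - y, gradient a y⟫) • (σ • (s • L (s • (x₀ - y)))) := by
        have h1 : Integrable (fun y : E3 => (a x₀) • (σ • (s • L (s • (x₀ - y))))) := by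
          refine aux_int (((hLcomp_cont.const_smul s).const_smul σ).const_smul (a x₀))
            x₀ s⁻¹ fun y hy => ?_
          simp [(hvan x₀ y (hnotin y hy)).2]
        have hz : ∫ y : E3, (a x₀) • (σ • (s • L (s • (x₀ - y)))) = 0 := by
          rw [integral_smul, integral_smul, integral_smul, hI0]
          simp
        have h2 : (fun y : E3 => ((a y + ⟪x₀ - y, gradient a y⟫) - a x₀) •
              (σ • (s • L (s • (x₀ - y)))))
            = fun y : E3 => (a y + ⟪x₀ - y, gradient a y⟫) • (σ • (s • L (s • (x₀ - y))))
              - (a x₀) • (σ • (s • L (s • (x₀ - y)))) :=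
          funext fun y => by ext v; simp only [ContinuousLinearMap.sub_apply, ContinuousLinearMap.smul_apply, smul_eq_mul]; ring
        rw [h2, integral_sub hT1int h1, hz, sub_zero]
      have hUbd : ‖∫ y : E3, (σ * χ (s • (x₀ - y))) •
            (toDual ℝ E3 (gradient a y) - toDual ℝ E3 (gradient a x₀))‖ ≤ M * s⁻¹ := by
        have hb : Integrable (fun y : E3 => (M * s⁻¹) * (σ * χ (s • (x₀ - y)))) :=
          hI1int.const_mul _
        refine le_trans (norm_integral_le_of_norm_le hb (Filter.Eventually.of_forall ?_)) ?_
        · intro y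
          by_cases hy : ‖x₀ - y‖ ≤ s⁻¹
          · have hlip : ‖gradient a y - gradient a x₀‖ ≤ M * s⁻¹ := by
              refine (hG_lip y x₀).trans (mul_le_mul_of_nonneg_left ?_ hM.le)
              rwa [norm_sub_rev]
            have n1 : ‖(toDual ℝ E3) (gradient a y) - (toDual ℝ E3) (gradient a x₀)‖
                = ‖gradient a y - gradient a x₀‖ := by
              rw [← map_sub]
              exact (toDual ℝ E3).norm_map _
            refine (norm_smul_le (σ * χ (s • (x₀ - y)))
              ((toDual ℝ E3) (gradient a y) - (toDual ℝ E3) (gradient a x₀))).trans ?_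
            rw [n1, Real.norm_eq_abs, abs_mul, abs_of_pos hσ, abs_of_nonneg (hχ_nonneg _)]
            calc σ * χ (s • (x₀ - y)) * ‖gradient a y - gradient a x₀‖
                ≤ σ * χ (s • (x₀ - y)) * (M * s⁻¹) := by
                  exact mul_le_mul_of_nonneg_left hlip
                    (mul_nonneg hσ.le (hχ_nonneg _))
            _ = (M * s⁻¹) * (σ * χ (s • (x₀ - y))) := by ring
          · have h := (hvan x₀ y (not_le.mp hy)).1
            simp [h]
        · rw [integral_const_mul, hI1, mul_one]
      have hVbd : ‖∫ y : E3, ((a y + ⟪x₀ - y, gradient a y⟫) - a x₀) •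
            (σ • (s • L (s • (x₀ - y))))‖ ≤ (M * s⁻¹) * K := by
        have hb : Integrable (fun y : E3 => (M * s⁻¹) * (σ * ‖L (s • (x₀ - y))‖)) :=
          hIKint.const_mul _
        refine le_trans (norm_integral_le_of_norm_le hb (Filter.Eventually.of_forall ?_)) ?_
        · intro y
          by_cases hy : ‖x₀ - y‖ ≤ s⁻¹
          · have hψ : |(a y + ⟪x₀ - y, gradient a y⟫) - a x₀| ≤ M * (s⁻¹ * s⁻¹) := by
              rw [abs_sub_comm]
              refine (htaylor y x₀).trans ?_
              have h2 : ‖x₀ - y‖ ^ 2 ≤ s⁻¹ * s⁻¹ := by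
                rw [pow_two]
                exact mul_le_mul hy hy (norm_nonneg _) (by positivity)
              exact mul_le_mul_of_nonneg_left h2 hM.le
            calc ‖((a y + ⟪x₀ - y, gradient a y⟫) - a x₀) • (σ • (s • L (s • (x₀ - y))))‖
                ≤ |(a y + ⟪x₀ - y, gradient a y⟫) - a x₀| * (σ * (s * ‖L (s • (x₀ - y))‖)) := by
                  refine (norm_smul_le ((a y + ⟪x₀ - y, gradient a y⟫) - a x₀)
                    (σ • s • L (s • (x₀ - y)))).trans ?_
                  rw [Real.norm_eq_abs]
                  exact mul_le_mul_of_nonneg_left (hσsLz _) (abs_nonneg _)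
            _ ≤ (M * (s⁻¹ * s⁻¹)) * (σ * (s * ‖L (s • (x₀ - y))‖)) :=
                  mul_le_mul_of_nonneg_right hψ (by positivity)
            _ = (M * s⁻¹) * (σ * ‖L (s • (x₀ - y))‖) * (s⁻¹ * s) := by ring
            _ = (M * s⁻¹) * (σ * ‖L (s • (x₀ - y))‖) := by
                  rw [inv_mul_cancel₀ hs.ne', mul_one]
          · have h := (hvan x₀ y (not_le.mp hy)).2
            simp [h]
        · rw [integral_const_mul, hIK]
      calc ‖(∫ y, F' x₀ y) - toDual ℝ E3 (gradient a x₀)‖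
          = ‖(∫ y : E3, (σ * χ (s • (x₀ - y))) •
                (toDual ℝ E3 (gradient a y) - toDual ℝ E3 (gradient a x₀)))
              + ∫ y : E3, ((a y + ⟪x₀ - y, gradient a y⟫) - a x₀) •
                (σ • (s • L (s • (x₀ - y))))‖ := by
            rw [hU_eq, hV_eq, hsplit]
            congr 1
            abel
      _ ≤ M * s⁻¹ + (M * s⁻¹) * K := le_trans (norm_add_le _ _) (add_le_add hUbd hVbd)
      _ = (M * (1 + K)) * s⁻¹ := by ring
    exact ⟨∫ y, F' x₀ y, by rw [show reg χ a σ = fun x => ∫ y, F x y from rfl]; exact hΦ, hest⟩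
  constructor
  · intro σ hσ x
    obtain ⟨Φ, hΦ, -⟩ := main σ hσ x
    exact hΦ.differentiableAt
  · refine ⟨M * (1 + K), by positivity, ?_⟩
    intro σ hσ x
    obtain ⟨Φ, hΦ, hb⟩ := main σ hσ x
    have hgr : gradient (reg χ a σ) x = (toDual ℝ E3).symm Φ :=
      (hasFDerivAt_iff_hasGradientAt.mp hΦ).gradient
    have hx : gradient a x = (toDual ℝ E3).symm (toDual ℝ E3 (gradient a x)) :=
      (LinearIsometryEquiv.symm_apply_apply _ _).symm
    rw [hgr, hx, ← map_sub, LinearIsometryEquiv.norm_map]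
    have : (σ:ℝ) ^ (-(1:ℝ)/3) = (σ ^ ((1:ℝ)/3))⁻¹ := by
      rw [neg_div, Real.rpow_neg hσ.le]
    rw [this]
    exact hb
end

section
/- Let M > 0 and let ã : ℝ³ → ℝ satisfy ‖ã‖_{W^{2,∞}(ℝ³)} ≤ M. Then for every σ > 0 the regularization a_σ is infinitely differentiable on ℝ³, and for every integer k ≥ 2 there exists a constant C > 0, depending only on M, χ and k, such that for every σ > 0 and every x ∈ ℝ³ the k-th iterated derivative of a_σ satisfies ‖D^k a_σ(x)‖ ≤ C σ^{(k−2)/3}. -/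
open MeasureTheory
open scoped RealInnerProductSpace

section Aux

open Set Function Filter Metric
open scoped Convolution Topology

noncomputable section

local notation "E3" => EuclideanSpace ℝ (Fin 3)

/-! ### Generic convolution derivative bound -/

theorem conv_deriv_le
    {F G' F'' : Type} [NormedAddCommGroup F] [NormedSpace ℝ F]
    [NormedAddCommGroup G'] [NormedSpace ℝ G']
    [NormedAddCommGroup F''] [NormedSpace ℝ F'']
    (k : ℕ) (f : E3 → F) (hf : Continuous f)
    (L : F →L[ℝ] G' →L[ℝ] F'') (g : E3 → G')
    (hg : ContDiff ℝ (⊤ : ℕ∞) g) (hcg : HasCompactSupport g) (x : E3) :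
    ‖iteratedFDeriv ℝ k (f ⋆[L] g) x‖ ≤
      ∫ y, ‖L‖ * ‖f y‖ * ‖iteratedFDeriv ℝ k g (x - y)‖ := by
  induction k generalizing G' F'' with
  | zero =>
    simp only [norm_iteratedFDeriv_zero]
    refine (norm_integral_le_integral_norm _).trans ?_
    refine integral_mono_of_nonneg (Eventually.of_forall fun y => norm_nonneg _) ?_
      (Eventually.of_forall fun y => ?_)
    · apply Continuous.integrable_of_hasCompactSupport
      · exact (continuous_const.mul hf.norm).mul ((hg.continuous.comp
          (continuous_const.sub continuous_id)).norm)
      · apply HasCompactSupport.mul_left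
        apply HasCompactSupport.norm
        exact hcg.comp_homeomorph (Homeomorph.subLeft x)
    · calc ‖(L (f y)) (g (x - y))‖ ≤ ‖L (f y)‖ * ‖g (x - y)‖ :=
            ContinuousLinearMap.le_opNorm _ _
        _ ≤ ‖L‖ * ‖f y‖ * ‖g (x - y)‖ := by
            gcongr; exact ContinuousLinearMap.le_opNorm _ _
  | succ k ih =>
    have hfd : fderiv ℝ (f ⋆[L] g) = f ⋆[L.precompR (EuclideanSpace ℝ (Fin 3))] (fderiv ℝ g) := by
      funext z
      exact (hcg.hasFDerivAt_convolution_right L hf.locallyIntegrable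
        (hg.of_le (by exact_mod_cast le_top)) z).fderiv
    rw [← norm_iteratedFDeriv_fderiv, hfd]
    refine (ih (L.precompR (EuclideanSpace ℝ (Fin 3))) (fderiv ℝ g)
      (hg.fderiv_right (by exact_mod_cast le_top)) (hcg.fderiv ℝ)).trans ?_
    refine integral_mono_of_nonneg (Eventually.of_forall fun y => by positivity) ?_
      (Eventually.of_forall fun y => ?_)
    · apply Continuous.integrable_of_hasCompactSupport
      · exact (continuous_const.mul hf.norm).mul
          (((hg.continuous_iteratedFDeriv (by exact_mod_cast le_top)).comp
            (continuous_const.sub continuous_id)).norm)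
      · apply HasCompactSupport.mul_left
        apply HasCompactSupport.norm
        exact (hcg.iteratedFDeriv _).comp_homeomorph (Homeomorph.subLeft x)
    · simp only
      rw [norm_iteratedFDeriv_fderiv]
      gcongr
      exact L.norm_precompR_le (EuclideanSpace ℝ (Fin 3))

/-! ### Bounds on the derivatives of the mollifier -/

theorem chi_bound (χ : E3 → ℝ) (hχ : ContDiff ℝ (⊤ : ℕ∞) χ)
    (hsupp : ∀ x, 1 < ‖x‖ → χ x = 0) (n : ℕ) :
    ∃ C > 0, ∀ i ≤ n, ∀ z, ‖iteratedFDeriv ℝ i χ z‖ ≤ C := by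
  have hcs : HasCompactSupport χ := by
    apply HasCompactSupport.intro (isCompact_closedBall (0:E3) 1)
    intro x hx
    exact hsupp x (by simpa [Metric.mem_closedBall, dist_zero_right, not_le] using hx)
  induction n with
  | zero =>
    obtain ⟨C, hC⟩ := ((hχ.continuous_iteratedFDeriv
      (by exact_mod_cast le_top : ((0:ℕ):WithTop ℕ∞) ≤ (⊤:ℕ∞)))).bounded_above_of_compact_support
      (hcs.iteratedFDeriv 0)
    refine ⟨max C 1, lt_max_of_lt_right one_pos, fun i hi z => ?_⟩
    interval_cases i
    exact (hC z).trans (le_max_left _ _)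
  | succ n ih =>
    obtain ⟨C, hCpos, hC⟩ := ih
    obtain ⟨C', hC'⟩ := ((hχ.continuous_iteratedFDeriv
      (by exact_mod_cast le_top : ((n+1:ℕ):WithTop ℕ∞) ≤ (⊤:ℕ∞)))).bounded_above_of_compact_support
      (hcs.iteratedFDeriv (n+1))
    refine ⟨max C C', lt_max_of_lt_left hCpos, fun i hi z => ?_⟩
    rcases Nat.lt_succ_iff_lt_or_eq.mp (Nat.lt_succ_of_le hi) with h | rfl
    · exact (hC i (Nat.lt_succ_iff.mp h) z).trans (le_max_left _ _)
    · exact (hC' z).trans (le_max_right _ _)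

theorem moll1_contDiff (χ : E3 → ℝ) (hχ : ContDiff ℝ (⊤ : ℕ∞) χ) (s c : ℝ) :
    ContDiff ℝ (⊤ : ℕ∞) (fun z : E3 => s * χ (c • z)) :=
  contDiff_const.mul (hχ.comp (contDiff_id.const_smul c))

theorem moll1_deriv_bound (χ : E3 → ℝ) (hχ : ContDiff ℝ (⊤ : ℕ∞) χ)
    {s c : ℝ} (hs : 0 < s) (hc : 0 < c) (n : ℕ) {C : ℝ}
    (hC : ∀ z, ‖iteratedFDeriv ℝ n χ z‖ ≤ C) (z : E3) :
    ‖iteratedFDeriv ℝ n (fun z : E3 => s * χ (c • z)) z‖ ≤ s * C * c ^ n := by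
  set T : E3 →L[ℝ] E3 := c • (ContinuousLinearMap.id ℝ E3) with hT
  have hTnorm : ‖T‖ ≤ c := by
    refine ContinuousLinearMap.opNorm_le_bound T hc.le fun x => ?_
    simp [T, norm_smul, abs_of_pos hc]
  have hcomp : (fun z : E3 => s * χ (c • z)) = fun z => s • ((χ ∘ T) z) := by
    funext z; simp [T, smul_eq_mul]
  rw [hcomp]
  have hχT : ContDiff ℝ (⊤ : ℕ∞) (χ ∘ ⇑T) := hχ.comp T.contDiff
  rw [iteratedFDeriv_const_smul_apply' (hχT.of_le (by exact_mod_cast le_top)).contDiffAt]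
  rw [T.iteratedFDeriv_comp_right hχ z (by exact_mod_cast le_top)]
  rw [norm_smul, Real.norm_eq_abs, abs_of_pos hs]
  have hC0 : 0 ≤ C := (norm_nonneg _).trans (hC z)
  have hcc : ‖(iteratedFDeriv ℝ n χ (T z)).compContinuousLinearMap fun _ => T‖
      ≤ C * c ^ n := by
    refine (ContinuousMultilinearMap.norm_compContinuousLinearMap_le _ _).trans ?_
    have hprod : (∏ _i : Fin n, ‖T‖) ≤ c ^ n := by
      rw [Finset.prod_const]
      simpa using pow_le_pow_left₀ (norm_nonneg _) hTnorm n
    exact mul_le_mul (hC _) hprod (Finset.prod_nonneg fun _ _ => norm_nonneg _) hC0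
  calc s * ‖(iteratedFDeriv ℝ n χ (T z)).compContinuousLinearMap fun _ => T‖
      ≤ s * (C * c ^ n) := mul_le_mul_of_nonneg_left hcc hs.le
    _ = s * C * c ^ n := by ring

theorem iter_id_one_le (z : E3) : ‖iteratedFDeriv ℝ 1 (fun w : E3 => w) z‖ ≤ 1 := by
  rw [← norm_iteratedFDeriv_fderiv (n := 0)]
  have : fderiv ℝ (fun w : E3 => w) = fun _ => ContinuousLinearMap.id ℝ E3 := by
    funext w; exact fderiv_id'
  rw [this, norm_iteratedFDeriv_zero]
  exact ContinuousLinearMap.norm_id_le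

theorem iter_id_ge_two (j : ℕ) (hj : 2 ≤ j) (z : E3) :
    ‖iteratedFDeriv ℝ j (fun w : E3 => w) z‖ = 0 := by
  obtain ⟨j', rfl⟩ : ∃ j', j = j' + 2 := ⟨j - 2, by omega⟩
  rw [← norm_iteratedFDeriv_fderiv (n := j' + 1)]
  have : fderiv ℝ (fun w : E3 => w) = fun _ => ContinuousLinearMap.id ℝ E3 := by
    funext w; exact fderiv_id'
  rw [this, iteratedFDeriv_const_of_ne (by omega)]
  simp

theorem moll2_deriv_bound (χ : E3 → ℝ) (hχ : ContDiff ℝ (⊤ : ℕ∞) χ)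
    {s c : ℝ} (hs : 0 < s) (hc : 0 < c) (n : ℕ) (hn : 1 ≤ n) {C : ℝ} (hCpos : 0 < C)
    (hC : ∀ i ≤ n, ∀ z, ‖iteratedFDeriv ℝ i (fun z : E3 => s * χ (c • z)) z‖ ≤ s * C * c ^ i)
    {z : E3} (hz : ‖z‖ ≤ c⁻¹) :
    ‖iteratedFDeriv ℝ n (fun z : E3 => (s * χ (c • z)) • z) z‖ ≤
      2 ^ n * s * C * c ^ (n - 1) := by
  have hmoll : ContDiff ℝ (⊤ : ℕ∞) (fun z : E3 => s * χ (c • z)) :=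
    contDiff_const.mul (hχ.comp (contDiff_id.const_smul c))
  have key := norm_iteratedFDeriv_smul_le (𝕜 := ℝ) (f := fun z : E3 => s * χ (c • z))
    (g := fun w : E3 => w) hmoll contDiff_id z (n := n) (by exact_mod_cast le_top)
  refine key.trans ?_
  have hterm : ∀ i ∈ Finset.range (n + 1),
      (n.choose i : ℝ) * ‖iteratedFDeriv ℝ i (fun z : E3 => s * χ (c • z)) z‖ *
        ‖iteratedFDeriv ℝ (n - i) (fun w : E3 => w) z‖ ≤
      (n.choose i : ℝ) * (s * C * c ^ (n - 1)) := by
    intro i hi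
    have hin : i ≤ n := Nat.lt_succ_iff.mp (Finset.mem_range.mp hi)
    rcases Nat.lt_or_ge (n - i) 2 with hlt | hge
    · rcases (by omega : n - i = 0 ∨ n - i = 1) with h0 | h1
      · have hieq : i = n := by omega
        subst hieq
        rw [h0, norm_iteratedFDeriv_zero]
        have hcn : c ^ i * c⁻¹ = c ^ (i - 1) := by
          have hi1 : i = (i - 1) + 1 := by omega
          nth_rewrite 1 [hi1]
          rw [pow_succ, mul_assoc, mul_inv_cancel₀ hc.ne', mul_one]
        have A := hC i le_rfl z
        have step : (i.choose i : ℝ) * ‖iteratedFDeriv ℝ i (fun z : E3 => s * χ (c • z)) z‖ *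
            ‖z‖ ≤ (i.choose i : ℝ) * (s * C * c ^ i) * c⁻¹ :=
          mul_le_mul (mul_le_mul_of_nonneg_left A (by positivity)) hz (norm_nonneg _)
            (by positivity)
        refine step.trans (le_of_eq ?_)
        rw [mul_assoc, mul_assoc, hcn]
      · rw [h1]
        have A := hC i hin z
        have hci : c ^ i = c ^ (n - 1) := by congr 1; omega
        calc (n.choose i : ℝ) * ‖iteratedFDeriv ℝ i (fun z : E3 => s * χ (c • z)) z‖ *
              ‖iteratedFDeriv ℝ 1 (fun w : E3 => w) z‖
            ≤ (n.choose i : ℝ) * (s * C * c ^ i) * 1 :=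
              mul_le_mul (mul_le_mul_of_nonneg_left A (by positivity)) (iter_id_one_le z)
                (norm_nonneg _) (by positivity)
          _ = (n.choose i : ℝ) * (s * C * c ^ (n - 1)) := by rw [hci]; ring
    · rw [iter_id_ge_two _ hge z, mul_zero]
      positivity
  refine (Finset.sum_le_sum hterm).trans ?_
  rw [← Finset.sum_mul]
  have hsum : (∑ i ∈ Finset.range (n + 1), (n.choose i : ℝ)) = 2 ^ n := by
    exact_mod_cast Nat.sum_range_choose n
  rw [hsum]; ring_nf; rfl

/-! ### Taylor estimate, integral estimate, affine functions -/

theorem fderiv_eq_toDual_gradient (a : E3 → ℝ) (x : E3) :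
    fderiv ℝ a x = InnerProductSpace.toDual ℝ E3 (gradient a x) := by
  rw [gradient, LinearIsometryEquiv.apply_symm_apply]

theorem taylor_bd {M : ℝ} (hM : 0 < M) (a : E3 → ℝ)
    (ha_diff : ∀ x, DifferentiableAt ℝ a x)
    (hgrad_lip : LipschitzWith M.toNNReal (gradient a)) (x₀ y : E3) :
    |a y - a x₀ - ⟪y - x₀, gradient a x₀⟫| ≤ M * ‖y - x₀‖ ^ 2 := by
  have hbound : ∀ z ∈ closedBall x₀ ‖y - x₀‖,
      ‖fderiv ℝ a z - fderiv ℝ a x₀‖ ≤ M * ‖y - x₀‖ := by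
    intro z hz
    rw [fderiv_eq_toDual_gradient a z, fderiv_eq_toDual_gradient a x₀,
      ← LinearIsometryEquiv.map_sub, LinearIsometryEquiv.norm_map]
    have := hgrad_lip.dist_le_mul z x₀
    rw [Real.coe_toNNReal _ hM.le] at this
    rw [← dist_eq_norm]
    refine this.trans ?_
    have : dist z x₀ ≤ ‖y - x₀‖ := by simpa [mem_closedBall] using hz
    exact mul_le_mul_of_nonneg_left this hM.le
  have key := Convex.norm_image_sub_le_of_norm_fderiv_le'
    (fun z _ => ha_diff z) hbound (convex_closedBall x₀ ‖y - x₀‖)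
    (mem_closedBall_self (norm_nonneg _)) (mem_closedBall.mpr (le_of_eq (dist_eq_norm y x₀)))
  have hφ : fderiv ℝ a x₀ (y - x₀) = ⟪y - x₀, gradient a x₀⟫ := by
    rw [fderiv_eq_toDual_gradient, InnerProductSpace.toDual_apply_apply, real_inner_comm]
  rw [hφ] at key
  calc |a y - a x₀ - ⟪y - x₀, gradient a x₀⟫| ≤ M * ‖y - x₀‖ * ‖y - x₀‖ := by
        simpa [Real.norm_eq_abs] using key
    _ = M * ‖y - x₀‖ ^ 2 := by ring

theorem key_int_le (W : E3 → ℝ) (hWnn : ∀ y, 0 ≤ W y)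
    (r B : ℝ) (hr : 0 < r) (x : E3)
    (hsupp : ∀ y, y ∉ closedBall x r → W y = 0)
    (hbd : ∀ y ∈ closedBall x r, W y ≤ B) :
    ∫ y, W y ≤ B * (r ^ 3 * (volume (ball (0:E3) 1)).toReal) := by
  have hmeas : MeasurableSet (closedBall x r) := measurableSet_closedBall
  have h1 : ∫ y, W y ≤ ∫ y, (closedBall x r).indicator (fun _ => B) y := by
    refine integral_mono_of_nonneg (Eventually.of_forall hWnn) ?_ (Eventually.of_forall ?_)
    · exact (IntegrableOn.integrable_indicator
        (integrableOn_const measure_closedBall_lt_top.ne) hmeas)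
    · intro y
      by_cases hy : y ∈ closedBall x r
      · simpa [indicator_of_mem hy] using hbd y hy
      · simp [indicator_of_notMem hy, hsupp y hy]
  rw [integral_indicator_const _ hmeas] at h1
  refine h1.trans (le_of_eq ?_)
  rw [measureReal_def, Measure.addHaar_closedBall volume x hr.le]
  simp only [smul_eq_mul]
  rw [ENNReal.toReal_mul, ENNReal.toReal_ofReal (by positivity)]
  have : Module.finrank ℝ (EuclideanSpace ℝ (Fin 3)) = 3 := by simp
  rw [this]
  ring

theorem affine_iter_zero (k : ℕ) (hk : 2 ≤ k) (c : ℝ) (v : E3) (x : E3) :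
    ‖iteratedFDeriv ℝ k (fun x : E3 => c + ⟪x, v⟫) x‖ = 0 := by
  obtain ⟨k', rfl⟩ : ∃ k', k = k' + 2 := ⟨k - 2, by omega⟩
  rw [← norm_iteratedFDeriv_fderiv (n := k' + 1)]
  have hfd : fderiv ℝ (fun x : E3 => c + ⟪x, v⟫)
      = fun _ => ((innerSL ℝ : E3 →L[ℝ] E3 →L[ℝ] ℝ)).flip v := by
    funext w
    have h1 : HasFDerivAt (fun x : E3 => c + ⟪x, v⟫)
        (((innerSL ℝ : E3 →L[ℝ] E3 →L[ℝ] ℝ)).flip v) w :=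
      ((((innerSL ℝ : E3 →L[ℝ] E3 →L[ℝ] ℝ)).flip v).hasFDerivAt (x := w)).const_add c
    exact h1.fderiv
  rw [hfd, iteratedFDeriv_const_of_ne (by omega)]
  simp

/-! ### The decomposition of `reg` -/

theorem cube_rpow_third {σ : ℝ} (hσ : 0 < σ) : (σ ^ ((1:ℝ)/3)) ^ (3:ℕ) = σ := by
  rw [← Real.rpow_natCast (σ ^ ((1:ℝ)/3)) 3, ← Real.rpow_mul hσ.le]
  norm_num

theorem moll_int_one (χ : E3 → ℝ) (hχc : Continuous χ)
    (hχ_supp : ∀ x, 1 < ‖x‖ → χ x = 0) (hχ_int : ∫ x, χ x = 1)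
    {σ : ℝ} (hσ : 0 < σ) (x : E3) :
    ∫ y : E3, σ * χ ((σ ^ ((1:ℝ)/3)) • (x - y)) = 1 := by
  set u := σ ^ ((1:ℝ)/3) with hu_def
  have hu : 0 < u := Real.rpow_pos_of_pos hσ _
  have hcu : u ^ (3:ℕ) = σ := cube_rpow_third hσ
  have h1 : (∫ y : E3, σ * χ (u • (x - y))) = ∫ z : E3, σ * χ (u • z) :=
    integral_sub_left_eq_self (fun z => σ * χ (u • z)) volume x
  rw [h1, integral_const_mul, Measure.integral_comp_smul volume χ u]
  have hfr : Module.finrank ℝ (EuclideanSpace ℝ (Fin 3)) = 3 := by simp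
  rw [hfr, hχ_int, smul_eq_mul, mul_one, abs_of_pos (by positivity), hcu]
  field_simp

theorem decomp (χ a : E3 → ℝ) (hχc : Continuous χ)
    (hχ_supp : ∀ x, 1 < ‖x‖ → χ x = 0) (hχ_int : ∫ x, χ x = 1)
    (hac : Continuous a) (hgc : Continuous (gradient a))
    {σ : ℝ} (hσ : 0 < σ) (x₀ : E3) :
    reg χ a σ = fun x =>
      ((fun y => a y - a x₀ - ⟪y - x₀, gradient a x₀⟫) ⋆[ContinuousLinearMap.mul ℝ ℝ]
        (fun z : E3 => σ * χ ((σ ^ ((1:ℝ)/3)) • z))) x +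
      ((fun y => gradient a y - gradient a x₀) ⋆[(innerSL ℝ : E3 →L[ℝ] E3 →L[ℝ] ℝ)]
        (fun z : E3 => (σ * χ ((σ ^ ((1:ℝ)/3)) • z)) • z)) x +
      (a x₀ + ⟪x - x₀, gradient a x₀⟫) := by
  funext x
  set u := σ ^ ((1:ℝ)/3) with hu_def
  have hu : 0 < u := Real.rpow_pos_of_pos hσ _
  set v := gradient a x₀ with hv_def
  set I₁ : E3 → ℝ := fun y => (ContinuousLinearMap.mul ℝ ℝ)
    (a y - a x₀ - ⟪y - x₀, v⟫) (σ * χ (u • (x - y))) with hI₁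
  set I₂ : E3 → ℝ := fun y => (innerSL ℝ : E3 →L[ℝ] E3 →L[ℝ] ℝ)
    (gradient a y - v) ((σ * χ (u • (x - y))) • (x - y)) with hI₂
  set I₃ : E3 → ℝ := fun y => (a x₀ + ⟪x - x₀, v⟫) * (σ * χ (u • (x - y))) with hI₃
  have hpt : ∀ y, (σ * χ (u • (x - y))) * (a y + ⟪x - y, gradient a y⟫)
      = I₁ y + I₂ y + I₃ y := by
    intro y
    have e2 : I₂ y = (σ * χ (u • (x - y))) * (⟪x - y, gradient a y⟫ - ⟪x - y, v⟫) := by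
      rw [hI₂]
      simp only [innerSL_apply_apply]
      rw [real_inner_smul_right, inner_sub_left, real_inner_comm (gradient a y) (x - y),
        real_inner_comm v (x - y)]
    have e3 : ⟪x - x₀, v⟫ = ⟪y - x₀, v⟫ + ⟪x - y, v⟫ := by
      rw [show x - x₀ = (y - x₀) + (x - y) by abel, inner_add_left]
    rw [hI₁, hI₃, e2]
    simp only [ContinuousLinearMap.mul_apply']
    rw [e3]
    ring
  have hsupp : ∀ y, y ∉ closedBall x u⁻¹ → χ (u • (x - y)) = 0 := by
    intro y hy
    apply hχ_supp
    rw [norm_smul, Real.norm_eq_abs, abs_of_pos hu]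
    have h1 : u⁻¹ < ‖x - y‖ := by
      rw [mem_closedBall, dist_comm, dist_eq_norm] at hy
      linarith [not_le.mp hy]
    calc (1:ℝ) = u * u⁻¹ := by field_simp
      _ < u * ‖x - y‖ := by gcongr
  have hmollc : Continuous (fun y : E3 => σ * χ (u • (x - y))) :=
    continuous_const.mul (hχc.comp ((continuous_const.sub continuous_id).const_smul u))
  have hcs : ∀ (W : E3 → ℝ), (∀ y, y ∉ closedBall x u⁻¹ → W y = 0) → Continuous W →
      Integrable W := by
    intro W hW hWc
    apply hWc.integrable_of_hasCompactSupport
    exact HasCompactSupport.intro (isCompact_closedBall x u⁻¹) hW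
  have hI₁i : Integrable I₁ := by
    refine hcs _ (fun y hy => ?_) ?_
    · simp [hI₁, hsupp y hy]
    · rw [hI₁]
      simp only [ContinuousLinearMap.mul_apply']
      exact (((hac.sub continuous_const).sub
        ((continuous_id.sub continuous_const).inner continuous_const))).mul hmollc
  have hI₂i : Integrable I₂ := by
    refine hcs _ (fun y hy => ?_) ?_
    · simp [hI₂, hsupp y hy]
    · rw [hI₂]
      simp only [innerSL_apply_apply]
      exact (hgc.sub continuous_const).inner
        (hmollc.smul (continuous_const.sub continuous_id))
  have hI₃i : Integrable I₃ := by
    refine hcs _ (fun y hy => ?_) ?_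
    · simp [hI₃, hsupp y hy]
    · exact continuous_const.mul hmollc
  have hreg : reg χ a σ x = ∫ y, (I₁ y + I₂ y + I₃ y) := by
    rw [reg]
    congr 1
    funext y
    exact hpt y
  have hI₁₂ : Integrable (fun y => I₁ y + I₂ y) := hI₁i.add hI₂i
  rw [hreg]
  rw [integral_add hI₁₂ hI₃i, integral_add hI₁i hI₂i]
  have h3 : ∫ y, I₃ y = a x₀ + ⟪x - x₀, v⟫ := by
    rw [hI₃, integral_const_mul, moll_int_one χ hχc hχ_supp hχ_int hσ x, mul_one]
  rw [h3]
  rfl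

end
end Aux

section MainProof
open Set Function Filter Metric
open scoped Convolution Topology

theorem stmt2
    (χ : EuclideanSpace ℝ (Fin 3) → ℝ)
    (hχ_smooth : ContDiff ℝ (⊤ : ℕ∞) χ)
    (hχ_nonneg : ∀ x, 0 ≤ χ x)
    (hχ_supp : ∀ x, 1 < ‖x‖ → χ x = 0)
    (hχ_int : ∫ x, χ x = 1)
    (M : ℝ) (hM : 0 < M)
    (a : EuclideanSpace ℝ (Fin 3) → ℝ)
    (ha_diff : ∀ x, DifferentiableAt ℝ a x)
    (ha_bd : ∀ x, |a x| ≤ M)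
    (hgrad_bd : ∀ x, ‖gradient a x‖ ≤ M)
    (hgrad_lip : LipschitzWith M.toNNReal (gradient a)) :
    (∀ σ > 0, ContDiff ℝ (⊤ : ℕ∞) (reg χ a σ)) ∧
    ∀ k : ℕ, 2 ≤ k → ∃ C > 0, ∀ σ > 0, ∀ x : EuclideanSpace ℝ (Fin 3),
      ‖iteratedFDeriv ℝ k (reg χ a σ) x‖ ≤ C * σ ^ (((k : ℝ) - 2)/3) := by
  have ha_cont : Continuous a := continuous_iff_continuousAt.mpr fun x => (ha_diff x).continuousAt
  have hg_cont : Continuous (gradient a) := hgrad_lip.continuous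
  have hχc : Continuous χ := hχ_smooth.continuous
  have hm0 : ∀ σ : ℝ, 0 < σ → ∀ z : EuclideanSpace ℝ (Fin 3),
      z ∉ closedBall (0 : EuclideanSpace ℝ (Fin 3)) (σ ^ ((1:ℝ)/3))⁻¹ →
      χ ((σ ^ ((1:ℝ)/3)) • z) = 0 := by
    intro σ hσ z hz
    have hu : 0 < σ ^ ((1:ℝ)/3) := Real.rpow_pos_of_pos hσ _
    apply hχ_supp
    rw [norm_smul, Real.norm_eq_abs, abs_of_pos hu]
    have h1 : (σ ^ ((1:ℝ)/3))⁻¹ < ‖z‖ := by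
      rw [mem_closedBall, dist_zero_right] at hz
      linarith [not_le.mp hz]
    calc (1:ℝ) = (σ ^ ((1:ℝ)/3)) * (σ ^ ((1:ℝ)/3))⁻¹ := by field_simp
      _ < (σ ^ ((1:ℝ)/3)) * ‖z‖ := by gcongr
  have hch₁ : ∀ σ : ℝ, 0 < σ →
      HasCompactSupport (fun z : EuclideanSpace ℝ (Fin 3) => σ * χ ((σ ^ ((1:ℝ)/3)) • z)) := by
    intro σ hσ
    exact HasCompactSupport.intro
      (isCompact_closedBall (0 : EuclideanSpace ℝ (Fin 3)) ((σ ^ ((1:ℝ)/3))⁻¹))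
      fun z hz => by rw [hm0 σ hσ z hz, mul_zero]
  have hch₂ : ∀ σ : ℝ, 0 < σ →
      HasCompactSupport (fun z : EuclideanSpace ℝ (Fin 3) =>
        (σ * χ ((σ ^ ((1:ℝ)/3)) • z)) • z) := by
    intro σ hσ
    exact HasCompactSupport.intro
      (isCompact_closedBall (0 : EuclideanSpace ℝ (Fin 3)) ((σ ^ ((1:ℝ)/3))⁻¹))
      fun z hz => by rw [hm0 σ hσ z hz, mul_zero, zero_smul]
  have hf₁c : ∀ x₀ : EuclideanSpace ℝ (Fin 3), Continuous
      (fun y => a y - a x₀ - ⟪y - x₀, gradient a x₀⟫) := fun x₀ =>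
    (ha_cont.sub continuous_const).sub
      ((continuous_id.sub continuous_const).inner continuous_const)
  have hf₂c : ∀ x₀ : EuclideanSpace ℝ (Fin 3), Continuous
      (fun y => gradient a y - gradient a x₀) := fun x₀ => hg_cont.sub continuous_const
  have haffs : ∀ x₀ : EuclideanSpace ℝ (Fin 3), ContDiff ℝ (⊤ : ℕ∞)
      (fun x : EuclideanSpace ℝ (Fin 3) => a x₀ + ⟪x - x₀, gradient a x₀⟫) := fun x₀ =>
    contDiff_const.add (ContDiff.inner ℝ (contDiff_id.sub contDiff_const) contDiff_const)
  have hF₁s : ∀ σ : ℝ, 0 < σ → ∀ x₀, ContDiff ℝ (⊤ : ℕ∞)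
      ((fun y => a y - a x₀ - ⟪y - x₀, gradient a x₀⟫) ⋆[ContinuousLinearMap.mul ℝ ℝ]
        (fun z : EuclideanSpace ℝ (Fin 3) => σ * χ ((σ ^ ((1:ℝ)/3)) • z))) := by
    intro σ hσ x₀
    exact (hch₁ σ hσ).contDiff_convolution_right _ ((hf₁c x₀).locallyIntegrable)
      (moll1_contDiff χ hχ_smooth σ _)
  have hF₂s : ∀ σ : ℝ, 0 < σ → ∀ x₀, ContDiff ℝ (⊤ : ℕ∞)
      ((fun y => gradient a y - gradient a x₀)
        ⋆[(innerSL ℝ : EuclideanSpace ℝ (Fin 3) →L[ℝ] EuclideanSpace ℝ (Fin 3) →L[ℝ] ℝ)]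
        (fun z : EuclideanSpace ℝ (Fin 3) => (σ * χ ((σ ^ ((1:ℝ)/3)) • z)) • z)) := by
    intro σ hσ x₀
    exact (hch₂ σ hσ).contDiff_convolution_right _ ((hf₂c x₀).locallyIntegrable)
      ((moll1_contDiff χ hχ_smooth σ _).smul contDiff_id)
  constructor
  · intro σ hσ
    rw [decomp χ a hχc hχ_supp hχ_int ha_cont hg_cont hσ 0]
    exact ((hF₁s σ hσ 0).add (hF₂s σ hσ 0)).add (haffs 0)
  · intro k hk
    obtain ⟨Cχ, hCχpos, hCχ⟩ := chi_bound χ hχ_smooth hχ_supp k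
    set V := (volume (ball (0 : EuclideanSpace ℝ (Fin 3)) 1)).toReal with hV_def
    have hVpos : 0 < V :=
      ENNReal.toReal_pos (measure_ball_pos volume 0 one_pos).ne' measure_ball_lt_top.ne
    refine ⟨(1 + 2^k) * M * Cχ * V, by positivity, ?_⟩
    intro σ hσ x₀
    rw [decomp χ a hχc hχ_supp hχ_int ha_cont hg_cont hσ x₀]
    set u := σ ^ ((1:ℝ)/3) with hu_def
    have hu : 0 < u := Real.rpow_pos_of_pos hσ _
    have hσu : σ = u ^ (3:ℕ) := (cube_rpow_third hσ).symm
    set v := gradient a x₀ with hv_def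
    have hts₁ : tsupport (fun z : EuclideanSpace ℝ (Fin 3) => σ * χ (u • z)) ⊆
        closedBall 0 u⁻¹ := by
      refine closure_minimal ?_ isClosed_closedBall
      intro z hz
      by_contra h
      exact hz (by show σ * χ (u • z) = 0; rw [show χ (u • z) = 0 from hm0 σ hσ z h, mul_zero])
    have hts₂ : tsupport (fun z : EuclideanSpace ℝ (Fin 3) => (σ * χ (u • z)) • z) ⊆
        closedBall 0 u⁻¹ := by
      refine closure_minimal ?_ isClosed_closedBall
      intro z hz
      by_contra h
      exact hz (by
        show (σ * χ (u • z)) • z = 0; rw [show χ (u • z) = 0 from hm0 σ hσ z h, mul_zero, zero_smul])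
    have hD₁zero : ∀ z, z ∉ closedBall (0 : EuclideanSpace ℝ (Fin 3)) u⁻¹ →
        iteratedFDeriv ℝ k (fun z : EuclideanSpace ℝ (Fin 3) => σ * χ (u • z)) z = 0 := by
      intro z hz
      by_contra h
      exact hz (hts₁ (support_iteratedFDeriv_subset k (by simpa [mem_support] using h)))
    have hD₂zero : ∀ z, z ∉ closedBall (0 : EuclideanSpace ℝ (Fin 3)) u⁻¹ →
        iteratedFDeriv ℝ k (fun z : EuclideanSpace ℝ (Fin 3) => (σ * χ (u • z)) • z) z = 0 := by
      intro z hz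
      by_contra h
      exact hz (hts₂ (support_iteratedFDeriv_subset k (by simpa [mem_support] using h)))
    have hmoll1bd : ∀ i ≤ k, ∀ z, ‖iteratedFDeriv ℝ i
        (fun z : EuclideanSpace ℝ (Fin 3) => σ * χ (u • z)) z‖ ≤ σ * Cχ * u ^ i :=
      fun i hi z => moll1_deriv_bound χ hχ_smooth hσ hu i (hCχ i hi) z
    have hb₁ : ‖iteratedFDeriv ℝ k
        ((fun y => a y - a x₀ - ⟪y - x₀, v⟫) ⋆[ContinuousLinearMap.mul ℝ ℝ]
          (fun z : EuclideanSpace ℝ (Fin 3) => σ * χ (u • z))) x₀‖ ≤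
        (M * (u⁻¹)^2 * (σ * Cχ * u ^ k)) * ((u⁻¹) ^ 3 * V) := by
      refine (conv_deriv_le k _ (hf₁c x₀) _ _ (moll1_contDiff χ hχ_smooth σ u)
        (hch₁ σ hσ) x₀).trans ?_
      refine key_int_le _ (fun y => by positivity) u⁻¹ _ (by positivity) x₀ ?_ ?_
      · intro y hy
        have hout : x₀ - y ∉ closedBall (0 : EuclideanSpace ℝ (Fin 3)) u⁻¹ := by
          rw [mem_closedBall, dist_zero_right]
          rw [mem_closedBall, dist_comm, dist_eq_norm] at hy
          simpa using hy
        have h0 := hD₁zero _ hout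
        simp [h0]
      · intro y hy
        have hyx : ‖y - x₀‖ ≤ u⁻¹ := by
          rw [mem_closedBall, dist_eq_norm] at hy
          exact hy
        have h1 : ‖ContinuousLinearMap.mul ℝ ℝ‖ ≤ 1 := ContinuousLinearMap.opNorm_mul_le ℝ ℝ
        have h2 : ‖a y - a x₀ - ⟪y - x₀, v⟫‖ ≤ M * (u⁻¹)^2 := by
          rw [Real.norm_eq_abs, hv_def]
          refine (taylor_bd hM a ha_diff hgrad_lip x₀ y).trans ?_
          gcongr
        have h3 : ‖iteratedFDeriv ℝ k
            (fun z : EuclideanSpace ℝ (Fin 3) => σ * χ (u • z)) (x₀ - y)‖ ≤ σ * Cχ * u ^ k :=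
          hmoll1bd k le_rfl _
        calc ‖ContinuousLinearMap.mul ℝ ℝ‖ * ‖a y - a x₀ - ⟪y - x₀, v⟫‖ *
              ‖iteratedFDeriv ℝ k (fun z : EuclideanSpace ℝ (Fin 3) => σ * χ (u • z)) (x₀ - y)‖
            ≤ 1 * (M * (u⁻¹)^2) * (σ * Cχ * u ^ k) :=
              mul_le_mul (mul_le_mul h1 h2 (norm_nonneg _) zero_le_one) h3 (norm_nonneg _)
                (by positivity)
          _ = M * (u⁻¹)^2 * (σ * Cχ * u ^ k) := by ring
    have hb₂ : ‖iteratedFDeriv ℝ k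
        ((fun y => gradient a y - v)
          ⋆[(innerSL ℝ : EuclideanSpace ℝ (Fin 3) →L[ℝ] EuclideanSpace ℝ (Fin 3) →L[ℝ] ℝ)]
          (fun z : EuclideanSpace ℝ (Fin 3) => (σ * χ (u • z)) • z)) x₀‖ ≤
        (M * u⁻¹ * (2 ^ k * σ * Cχ * u ^ (k-1))) * ((u⁻¹) ^ 3 * V) := by
      refine (conv_deriv_le k _ (hf₂c x₀) _ _ ((moll1_contDiff χ hχ_smooth σ u).smul contDiff_id)
        (hch₂ σ hσ) x₀).trans ?_
      refine key_int_le _ (fun y => by positivity) u⁻¹ _ (by positivity) x₀ ?_ ?_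
      · intro y hy
        have hout : x₀ - y ∉ closedBall (0 : EuclideanSpace ℝ (Fin 3)) u⁻¹ := by
          rw [mem_closedBall, dist_zero_right]
          rw [mem_closedBall, dist_comm, dist_eq_norm] at hy
          simpa using hy
        have h0 := hD₂zero _ hout
        have h0' : iteratedFDeriv ℝ k ((fun z : EuclideanSpace ℝ (Fin 3) => σ * χ (u • z)) • id)
            (x₀ - y) = 0 := h0
        simp [h0']
      · intro y hy
        have hyx : ‖y - x₀‖ ≤ u⁻¹ := by
          rw [mem_closedBall, dist_eq_norm] at hy
          exact hy
        have h1 : ‖(innerSL ℝ : EuclideanSpace ℝ (Fin 3) →L[ℝ]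
            EuclideanSpace ℝ (Fin 3) →L[ℝ] ℝ)‖ ≤ 1 := by
          refine ContinuousLinearMap.opNorm_le_bound _ zero_le_one fun w => ?_
          rw [innerSL_apply_norm, one_mul]
        have h2 : ‖gradient a y - v‖ ≤ M * u⁻¹ := by
          have hd := hgrad_lip.dist_le_mul y x₀
          rw [Real.coe_toNNReal _ hM.le] at hd
          rw [← dist_eq_norm, hv_def]
          refine hd.trans ?_
          rw [dist_eq_norm]
          exact mul_le_mul_of_nonneg_left hyx hM.le
        have hzz : ‖x₀ - y‖ ≤ u⁻¹ := by rwa [norm_sub_rev]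
        have h3 : ‖iteratedFDeriv ℝ k
            (fun z : EuclideanSpace ℝ (Fin 3) => (σ * χ (u • z)) • z) (x₀ - y)‖ ≤
            2 ^ k * σ * Cχ * u ^ (k - 1) :=
          moll2_deriv_bound χ hχ_smooth hσ hu k (by omega) hCχpos hmoll1bd hzz
        calc ‖(innerSL ℝ : EuclideanSpace ℝ (Fin 3) →L[ℝ]
              EuclideanSpace ℝ (Fin 3) →L[ℝ] ℝ)‖ * ‖gradient a y - v‖ *
              ‖iteratedFDeriv ℝ k
                (fun z : EuclideanSpace ℝ (Fin 3) => (σ * χ (u • z)) • z) (x₀ - y)‖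
            ≤ 1 * (M * u⁻¹) * (2 ^ k * σ * Cχ * u ^ (k-1)) :=
              mul_le_mul (mul_le_mul h1 h2 (norm_nonneg _) zero_le_one) h3 (norm_nonneg _)
                (by positivity)
          _ = M * u⁻¹ * (2 ^ k * σ * Cχ * u ^ (k-1)) := by ring
    have haff0 : ‖iteratedFDeriv ℝ k
        (fun x : EuclideanSpace ℝ (Fin 3) => a x₀ + ⟪x - x₀, v⟫) x₀‖ = 0 := by
      have heq : (fun x : EuclideanSpace ℝ (Fin 3) => a x₀ + ⟪x - x₀, v⟫)
          = fun x => (a x₀ - ⟪x₀, v⟫) + ⟪x, v⟫ := by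
        funext x
        rw [inner_sub_left]
        ring
      rw [heq]
      exact affine_iter_zero k hk _ v x₀
    have e : iteratedFDeriv ℝ k (fun x =>
        ((fun y => a y - a x₀ - ⟪y - x₀, v⟫) ⋆[ContinuousLinearMap.mul ℝ ℝ]
          (fun z : EuclideanSpace ℝ (Fin 3) => σ * χ (u • z))) x +
        ((fun y => gradient a y - v)
          ⋆[(innerSL ℝ : EuclideanSpace ℝ (Fin 3) →L[ℝ] EuclideanSpace ℝ (Fin 3) →L[ℝ] ℝ)]
          (fun z : EuclideanSpace ℝ (Fin 3) => (σ * χ (u • z)) • z)) x +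
        (a x₀ + ⟪x - x₀, v⟫)) x₀
        = iteratedFDeriv ℝ k
            ((fun y => a y - a x₀ - ⟪y - x₀, v⟫) ⋆[ContinuousLinearMap.mul ℝ ℝ]
              (fun z : EuclideanSpace ℝ (Fin 3) => σ * χ (u • z))) x₀ +
          iteratedFDeriv ℝ k
            ((fun y => gradient a y - v)
              ⋆[(innerSL ℝ : EuclideanSpace ℝ (Fin 3) →L[ℝ] EuclideanSpace ℝ (Fin 3) →L[ℝ] ℝ)]
              (fun z : EuclideanSpace ℝ (Fin 3) => (σ * χ (u • z)) • z)) x₀ +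
          iteratedFDeriv ℝ k
            (fun x : EuclideanSpace ℝ (Fin 3) => a x₀ + ⟪x - x₀, v⟫) x₀ := by
      rw [iteratedFDeriv_add_apply'
        (((hF₁s σ hσ x₀).add (hF₂s σ hσ x₀)).of_le (by exact_mod_cast le_top)).contDiffAt
        ((haffs x₀).of_le (by exact_mod_cast le_top)).contDiffAt,
        iteratedFDeriv_add_apply'
        ((hF₁s σ hσ x₀).of_le (by exact_mod_cast le_top)).contDiffAt
        ((hF₂s σ hσ x₀).of_le (by exact_mod_cast le_top)).contDiffAt]
    have hupow : u ^ (k - 2) = σ ^ (((k:ℝ) - 2)/3) := by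
      rw [hu_def, ← Real.rpow_natCast (σ ^ ((1:ℝ)/3)) (k-2), ← Real.rpow_mul hσ.le]
      congr 1
      rw [Nat.cast_sub hk]
      push_cast
      ring
    have hx1 : M * (u⁻¹)^2 * (σ * Cχ * u ^ k) * ((u⁻¹) ^ 3 * V) = M * Cχ * V * u ^ (k-2) := by
      have hk2 : u ^ k = u ^ (k-2) * u ^ 2 := by rw [← pow_add]; congr 1; omega
      rw [hσu, hk2]
      field_simp
    have hx2 : M * u⁻¹ * (2 ^ k * σ * Cχ * u ^ (k-1)) * ((u⁻¹) ^ 3 * V)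
        = 2 ^ k * (M * Cχ * V * u ^ (k-2)) := by
      have hk1 : u ^ (k-1) = u ^ (k-2) * u := by rw [← pow_succ]; congr 1; omega
      rw [hσu, hk1]
      field_simp
    calc ‖iteratedFDeriv ℝ k (fun x =>
          ((fun y => a y - a x₀ - ⟪y - x₀, v⟫) ⋆[ContinuousLinearMap.mul ℝ ℝ]
            (fun z : EuclideanSpace ℝ (Fin 3) => σ * χ (u • z))) x +
          ((fun y => gradient a y - v)
            ⋆[(innerSL ℝ : EuclideanSpace ℝ (Fin 3) →L[ℝ] EuclideanSpace ℝ (Fin 3) →L[ℝ] ℝ)]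
            (fun z : EuclideanSpace ℝ (Fin 3) => (σ * χ (u • z)) • z)) x +
          (a x₀ + ⟪x - x₀, v⟫)) x₀‖
        ≤ (M * (u⁻¹)^2 * (σ * Cχ * u ^ k)) * ((u⁻¹) ^ 3 * V) +
            (M * u⁻¹ * (2 ^ k * σ * Cχ * u ^ (k-1))) * ((u⁻¹) ^ 3 * V) + 0 := by
          rw [e]
          refine (norm_add₃_le).trans ?_
          exact add_le_add (add_le_add hb₁ hb₂) (le_of_eq haff0)
      _ = (1 + 2^k) * M * Cχ * V * σ ^ (((k:ℝ) - 2)/3) := by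
          rw [hx1, hx2, add_zero, ← hupow]
          ring
end MainProof
end

section
/- Let A : ℝ³ → ℝ² be a C¹ map such that A and its derivative are bounded, and let θ ∈ ℝ² be a unit vector. Define b(t, x', x₃) := exp( −i ∫_0^t θ·A(x' − sθ, x₃) ds ). Then b solves the transport equation: for every t ∈ ℝ and every (x', x₃) ∈ ℝ² × ℝ, ∂_t b(t, x', x₃) + θ·∇_{x'} b(t, x', x₃) + i ( θ·A(x', x₃) ) b(t, x', x₃) = 0. -/
open MeasureTheory
open scoped RealInnerProductSpace

theorem stmt6
    (A : EuclideanSpace ℝ (Fin 2) × ℝ → EuclideanSpace ℝ (Fin 2))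
    (hA : ContDiff ℝ 1 A)
    (hAbd : ∃ C, ∀ x, ‖A x‖ ≤ C ∧ ‖fderiv ℝ A x‖ ≤ C)
    (θ : EuclideanSpace ℝ (Fin 2)) (hθ : ‖θ‖ = 1)
    (b : ℝ → EuclideanSpace ℝ (Fin 2) → ℝ → ℂ)
    (hb : ∀ (t : ℝ) (x' : EuclideanSpace ℝ (Fin 2)) (x₃ : ℝ),
      b t x' x₃ =
        Complex.exp (-Complex.I *
          ((∫ s in (0:ℝ)..t, ⟪θ, A (x' - s • θ, x₃)⟫ : ℝ) : ℂ))) :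
    ∀ (t : ℝ) (x' : EuclideanSpace ℝ (Fin 2)) (x₃ : ℝ),
      deriv (fun τ => b τ x' x₃) t
        + lineDeriv ℝ (fun y' => b t y' x₃) x' θ
        + Complex.I * ((⟪θ, A (x', x₃)⟫ : ℝ) : ℂ) * b t x' x₃ = 0 := by
  intro t x' x₃
  set f : ℝ → ℝ := fun u => ⟪θ, A (x' - u • θ, x₃)⟫ with hf
  have hfc : Continuous f := by
    apply Continuous.inner continuous_const
    exact hA.continuous.comp (by fun_prop)
  have hfint : ∀ a c : ℝ, IntervalIntegrable f MeasureTheory.volume a c :=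
    fun a c => hfc.intervalIntegrable a c
  set G : ℝ → ℝ := fun u => ∫ s in (0:ℝ)..u, f s with hG
  have hGd : ∀ u : ℝ, HasDerivAt G (f u) u := fun u =>
    intervalIntegral.integral_hasDerivAt_right (hfint 0 u)
      (hfc.stronglyMeasurableAtFilter _ _) hfc.continuousAt
  -- time derivative
  have hbt : ∀ τ, b τ x' x₃ = Complex.exp (-Complex.I * (G τ : ℂ)) := fun τ => by
    rw [hb]
  have h1 : HasDerivAt (fun τ => b τ x' x₃)
      (Complex.exp (-Complex.I * (G t : ℂ)) * (-Complex.I * (f t : ℂ))) t := by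
    have := (((hGd t).ofReal_comp).const_mul (-Complex.I)).cexp
    simpa [hbt] using this
  -- spatial directional derivative
  have hkey : ∀ r : ℝ, b t (x' + r • θ) x₃
      = Complex.exp (-Complex.I * ((G (t - r) - G (-r) : ℝ) : ℂ)) := by
    intro r
    rw [hb]
    congr 2
    have hpt : ∀ s : ℝ, (x' + r • θ) - s • θ = x' - (s - r) • θ := by
      intro s; rw [sub_smul]; abel
    have : (∫ s in (0:ℝ)..t, ⟪θ, A ((x' + r • θ) - s • θ, x₃)⟫)
        = ∫ s in (0:ℝ)..t, f (s - r) := by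
      apply intervalIntegral.integral_congr
      intro s _
      simp [hf, hpt s]
    rw [this, intervalIntegral.integral_comp_sub_right f r]
    rw [← intervalIntegral.integral_interval_sub_left (hfint 0 (t - r)) (hfint 0 (0 - r))]
    simp [hG]
  have h2 : HasDerivAt (fun r : ℝ => b t (x' + r • θ) x₃)
      (Complex.exp (-Complex.I * ((G t - G 0 : ℝ) : ℂ))
        * (-Complex.I * ((f t * (-1) - f 0 * (-1) : ℝ) : ℂ))) 0 := by
    have ha : HasDerivAt (fun r : ℝ => G (t - r)) (f t * (-1)) 0 := by
      have := (hGd (t - 0)).comp 0 ((hasDerivAt_id (0:ℝ)).const_sub t)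
      simpa [Function.comp_def] using this
    have hb' : HasDerivAt (fun r : ℝ => G (-r)) (f 0 * (-1)) 0 := by
      have := (hGd (-0 : ℝ)).comp 0 ((hasDerivAt_id (0:ℝ)).neg)
      simpa [Function.comp_def] using this
    have := (((ha.sub hb').ofReal_comp).const_mul (-Complex.I)).cexp
    simp only [Pi.sub_apply, sub_zero, neg_zero] at this
    have heq : (fun r : ℝ => Complex.exp (-Complex.I * ((G (t - r) - G (-r) : ℝ) : ℂ)))
        = fun r : ℝ => b t (x' + r • θ) x₃ := by
      funext r; rw [hkey r]
    rw [← heq]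
    convert this using 2 <;> push_cast <;> ring
  have hG0 : G 0 = 0 := by simp [hG]
  have hld : lineDeriv ℝ (fun y' => b t y' x₃) x' θ
      = Complex.exp (-Complex.I * ((G t : ℝ) : ℂ))
        * (-Complex.I * ((f t * (-1) - f 0 * (-1) : ℝ) : ℂ)) := by
    rw [lineDeriv]
    rw [h2.deriv]
    simp [hG0]
  have hf0 : (⟪θ, A (x', x₃)⟫ : ℝ) = f 0 := by simp [hf]
  rw [h1.deriv, hld, hf0, hbt t]
  push_cast
  ring
end

section
/- Let R > 1 and let θ ∈ ℝ² be a unit vector. Let φ ∈ L²(ℝ³; ℂ) satisfy φ(y', y₃) = 0 for almost every (y', y₃) ∈ ℝ² × ℝ with |y'| ≤ R or |y'| ≥ R + 1. Then for every σ > 0, every T > 0 and every measurable set ω ⊆ {x' ∈ ℝ² : |x'| ≤ R − 1}, one has ∫_0^T ∫_ℝ ∫_ω |φ(x' − 2σtθ, x₃)|² dx' dx₃ dt ≤ (R/σ) ∫_{ℝ³} |φ(y)|² dy. -/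
open MeasureTheory
open scoped RealInnerProductSpace ENNReal

theorem stmt9
    (R : ℝ) (hR : 1 < R)
    (θ : EuclideanSpace ℝ (Fin 2)) (hθ : ‖θ‖ = 1)
    (φ : EuclideanSpace ℝ (Fin 2) × ℝ → ℂ)
    (hφ : MemLp φ 2 volume)
    (hsupp : ∀ᵐ y : EuclideanSpace ℝ (Fin 2) × ℝ,
      (‖y.1‖ ≤ R ∨ R + 1 ≤ ‖y.1‖) → φ y = 0) :
    ∀ σ > 0, ∀ T > 0, ∀ ω : Set (EuclideanSpace ℝ (Fin 2)),
      MeasurableSet ω → ω ⊆ {x' | ‖x'‖ ≤ R - 1} →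
      (∫ t in Set.Ioc (0:ℝ) T, ∫ x₃ : ℝ, ∫ x' in ω,
          ‖φ (x' - (2 * σ * t) • θ, x₃)‖ ^ 2)
        ≤ (R / σ) * ∫ y : EuclideanSpace ℝ (Fin 2) × ℝ, ‖φ y‖ ^ 2 := by
  intro σ hσ T hT ω hω hωR
  have hψ_nonneg : ∀ y : EuclideanSpace ℝ (Fin 2) × ℝ, (0:ℝ) ≤ ‖φ y‖ ^ 2 :=
    fun y => by positivity
  have hψ_int : Integrable (fun y : EuclideanSpace ℝ (Fin 2) × ℝ => ‖φ y‖ ^ 2) volume := by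
    have h := hφ.integrable_norm_rpow (by norm_num) (by norm_num)
    have h2 : ((2:ℝ≥0∞)).toReal = (2:ℝ) := by norm_num
    rw [h2] at h
    exact h.congr (Filter.Eventually.of_forall fun y => by
      show ‖φ y‖ ^ (2:ℝ) = ‖φ y‖ ^ (2:ℕ)
      rw [show ((2:ℝ)) = ((2:ℕ):ℝ) by norm_num, Real.rpow_natCast])
  have hI_nonneg : (0:ℝ) ≤ ∫ y : EuclideanSpace ℝ (Fin 2) × ℝ, ‖φ y‖ ^ 2 :=
    integral_nonneg hψ_nonneg
  -- translation is measure preserving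
  have hτ : ∀ v : EuclideanSpace ℝ (Fin 2),
      MeasurePreserving (fun z : EuclideanSpace ℝ (Fin 2) × ℝ => (z.1 - v, z.2))
        volume volume := by
    intro v
    have h1 : MeasurePreserving (· - v) (volume : Measure (EuclideanSpace ℝ (Fin 2))) volume :=
      measurePreserving_sub_right volume v
    have h2 : MeasurePreserving (id : ℝ → ℝ) volume volume := MeasurePreserving.id _
    have h3 := h1.prod h2
    rw [← Measure.volume_eq_prod] at h3
    exact h3.comp (MeasurePreserving.id _)
  have hψτ : ∀ v : EuclideanSpace ℝ (Fin 2),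
      Integrable (fun z : EuclideanSpace ℝ (Fin 2) × ℝ => ‖φ (z.1 - v, z.2)‖ ^ 2) volume :=
    fun v => by
    have := ((hτ v).integrable_comp hψ_int.aestronglyMeasurable).2 hψ_int
    exact this
  have hψτ_int_eq : ∀ v : EuclideanSpace ℝ (Fin 2),
      (∫ z : EuclideanSpace ℝ (Fin 2) × ℝ, ‖φ (z.1 - v, z.2)‖ ^ 2)
        = ∫ y : EuclideanSpace ℝ (Fin 2) × ℝ, ‖φ y‖ ^ 2 :=
    fun v => (hτ v).integral_comp ((MeasurableEquiv.subRight v).prodCongr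
      (MeasurableEquiv.refl ℝ)).measurableEmbedding
      (fun y : EuclideanSpace ℝ (Fin 2) × ℝ => ‖φ y‖ ^ 2)
  -- key bound: for each t the inner double integral is at most I
  have key1 : ∀ t : ℝ,
      (∫ x₃ : ℝ, ∫ x' in ω, ‖φ (x' - (2 * σ * t) • θ, x₃)‖ ^ 2)
        ≤ ∫ y : EuclideanSpace ℝ (Fin 2) × ℝ, ‖φ y‖ ^ 2 := by
    intro t
    set v : EuclideanSpace ℝ (Fin 2) := (2 * σ * t) • θ with hv
    have hprod : Integrable (fun z : EuclideanSpace ℝ (Fin 2) × ℝ => ‖φ (z.1 - v, z.2)‖ ^ 2)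
        ((volume : Measure (EuclideanSpace ℝ (Fin 2))).prod (volume : Measure ℝ)) := by
      rw [← Measure.volume_eq_prod]; exact hψτ v
    have hfub : (∫ x₃ : ℝ, ∫ x' : EuclideanSpace ℝ (Fin 2), ‖φ (x' - v, x₃)‖ ^ 2)
        = ∫ y : EuclideanSpace ℝ (Fin 2) × ℝ, ‖φ y‖ ^ 2 := by
      rw [← hψτ_int_eq v, Measure.volume_eq_prod,
        integral_prod_symm (fun z : EuclideanSpace ℝ (Fin 2) × ℝ => ‖φ (z.1 - v, z.2)‖ ^ 2) hprod]
    rw [← hfub]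
    refine integral_mono_of_nonneg ?_ hprod.integral_prod_right ?_
    · exact Filter.Eventually.of_forall fun x₃ => setIntegral_nonneg hω fun x' _ => by positivity
    · filter_upwards [hprod.prod_left_ae] with x₃ hint
      exact setIntegral_le_integral hint (Filter.Eventually.of_forall fun x' => by positivity)
  -- vanishing for large t
  have key2 : ∀ t : ℝ, R ≤ σ * t →
      (∫ x₃ : ℝ, ∫ x' in ω, ‖φ (x' - (2 * σ * t) • θ, x₃)‖ ^ 2) = 0 := by
    intro t ht
    set v : EuclideanSpace ℝ (Fin 2) := (2 * σ * t) • θ with hv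
    have hnorm_v : ‖v‖ = 2 * σ * t := by
      rw [hv, norm_smul, hθ, mul_one, Real.norm_eq_abs, abs_of_nonneg]
      nlinarith
    -- pull back support hypothesis
    have hae : ∀ᵐ z : EuclideanSpace ℝ (Fin 2) × ℝ,
        (‖z.1 - v‖ ≤ R ∨ R + 1 ≤ ‖z.1 - v‖) → φ (z.1 - v, z.2) = 0 := by
      have hm : AEMeasurable (fun z : EuclideanSpace ℝ (Fin 2) × ℝ => (z.1 - v, z.2)) volume :=
        (hτ v).measurable.aemeasurable
      have := ae_of_ae_map hm (by rw [(hτ v).map_eq]; exact hsupp)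
      exact this
    -- on ω the argument always lies in the zero region
    have hzero : ∀ᵐ z : EuclideanSpace ℝ (Fin 2) × ℝ,
        z.1 ∈ ω → ‖φ (z.1 - v, z.2)‖ ^ 2 = 0 := by
      filter_upwards [hae] with z hz hzω
      have h1 : ‖z.1‖ ≤ R - 1 := hωR hzω
      have h2 : R + 1 ≤ ‖z.1 - v‖ := by
        have := norm_sub_norm_le v z.1
        have h3 : ‖v - z.1‖ = ‖z.1 - v‖ := norm_sub_rev v z.1
        rw [h3] at this
        nlinarith
      rw [hz (Or.inr h2), norm_zero]
      norm_num
    -- transfer to iterated a.e. statement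
    have hswap : ∀ᵐ z : ℝ × EuclideanSpace ℝ (Fin 2)
        ∂((volume : Measure ℝ).prod (volume : Measure (EuclideanSpace ℝ (Fin 2)))),
        z.2 ∈ ω → ‖φ (z.2 - v, z.1)‖ ^ 2 = 0 := by
      have hm : AEMeasurable (Prod.swap : ℝ × EuclideanSpace ℝ (Fin 2) →
          EuclideanSpace ℝ (Fin 2) × ℝ)
          ((volume : Measure ℝ).prod (volume : Measure (EuclideanSpace ℝ (Fin 2)))) :=
        measurable_swap.aemeasurable
      have h0 : ∀ᵐ y : EuclideanSpace ℝ (Fin 2) × ℝ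
          ∂((volume : Measure ℝ).prod
            (volume : Measure (EuclideanSpace ℝ (Fin 2)))).map Prod.swap,
          y.1 ∈ ω → ‖φ (y.1 - v, y.2)‖ ^ 2 = 0 := by
        rw [Measure.prod_swap, ← Measure.volume_eq_prod]
        exact hzero
      exact ae_of_ae_map
        (p := fun y : EuclideanSpace ℝ (Fin 2) × ℝ =>
          y.1 ∈ ω → ‖φ (y.1 - v, y.2)‖ ^ 2 = 0) hm h0
    have hiter := Measure.ae_ae_of_ae_prod hswap
    have : ∀ᵐ x₃ : ℝ, (∫ x' in ω, ‖φ (x' - v, x₃)‖ ^ 2) = 0 := by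
      filter_upwards [hiter] with x₃ hx₃
      have hrest : ∀ᵐ x' ∂(volume.restrict ω), ‖φ (x' - v, x₃)‖ ^ 2 = 0 :=
        (ae_restrict_iff' hω).2 hx₃
      exact integral_eq_zero_of_ae hrest
    calc (∫ x₃ : ℝ, ∫ x' in ω, ‖φ (x' - v, x₃)‖ ^ 2)
        = ∫ x₃ : ℝ, (0:ℝ) := integral_congr_ae this
      _ = 0 := integral_zero _ _
  -- put everything together
  set F : ℝ → ℝ := fun t => ∫ x₃ : ℝ, ∫ x' in ω, ‖φ (x' - (2 * σ * t) • θ, x₃)‖ ^ 2 with hF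
  set I := ∫ y : EuclideanSpace ℝ (Fin 2) × ℝ, ‖φ y‖ ^ 2 with hIdef
  by_cases hFint : IntegrableOn F (Set.Ioc (0:ℝ) T) volume
  · have hGint : IntegrableOn ((Set.Icc (0:ℝ) (R/σ)).indicator fun _ => I)
        (Set.Ioc (0:ℝ) T) volume :=
      (integrableOn_const measure_Ioc_lt_top.ne).indicator measurableSet_Icc
    have hle : ∀ t ∈ Set.Ioc (0:ℝ) T,
        F t ≤ (Set.Icc (0:ℝ) (R/σ)).indicator (fun _ => I) t := by
      intro t ht
      by_cases hc : t ≤ R / σ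
      · rw [Set.indicator_of_mem (Set.mem_Icc.2 ⟨le_of_lt ht.1, hc⟩)]
        exact key1 t
      · push_neg at hc
        rw [Set.indicator_of_notMem (fun hmem => absurd hmem.2 (not_le.2 hc))]
        have : R ≤ σ * t := by
          rw [div_lt_iff₀ hσ] at hc
          nlinarith
        exact le_of_eq (key2 t this)
    have hstep := setIntegral_mono_on hFint hGint measurableSet_Ioc hle
    refine hstep.trans ?_
    rw [setIntegral_indicator measurableSet_Icc]
    rw [setIntegral_const]
    have hmeas : (volume (Set.Ioc (0:ℝ) T ∩ Set.Icc 0 (R/σ))).toReal ≤ R / σ := by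
      have h1 : volume (Set.Ioc (0:ℝ) T ∩ Set.Icc 0 (R/σ)) ≤ volume (Set.Icc (0:ℝ) (R/σ)) :=
        measure_mono Set.inter_subset_right
      have h2 : volume (Set.Icc (0:ℝ) (R/σ)) = ENNReal.ofReal (R/σ) := by
        rw [Real.volume_Icc, sub_zero]
      calc (volume (Set.Ioc (0:ℝ) T ∩ Set.Icc 0 (R/σ))).toReal
          ≤ (volume (Set.Icc (0:ℝ) (R/σ))).toReal := by
            apply ENNReal.toReal_mono _ h1
            rw [h2]; exact ENNReal.ofReal_ne_top
        _ = R / σ := by rw [h2, ENNReal.toReal_ofReal (by positivity)]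
    exact mul_le_mul_of_nonneg_right hmeas hI_nonneg
  · rw [integral_undef hFint]
    positivity
end

section
/- For every M > 0, C₀ > 0, ε ∈ (0,1) and σ* ≥ 1 there exist constants C > 0 and μ ∈ (0,1) such that the following holds: if f ∈ L²(ℝ²; ℂ) and δ > 0 satisfy ∫_{ℝ²} (1 + |ξ|²) |f̂(ξ)|² dξ ≤ M² and |f̂(ξ)| ≤ C₀ (1 + |ξ|²)⁴ ( σ⁶ δ + σ^{−ε} ) for every σ > σ* and almost every ξ ∈ ℝ², then ‖f‖_{L²(ℝ²)} ≤ C δ^μ. -/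
open MeasureTheory
open scoped RealInnerProductSpace ENNReal

/- `g` plays the role of the Fourier–Plancherel transform `f̂` of `f` on ℝ²,
normalized so that `‖f̂‖_{L²} = ‖f‖_{L²}` (this Plancherel identity is the
hypothesis `hPlancherel`). -/
set_option maxHeartbeats 2000000 in
theorem stmt15
    (M C₀ ε σstar : ℝ) (hM : 0 < M) (hC₀ : 0 < C₀)
    (hε : ε ∈ Set.Ioo (0:ℝ) 1) (hσstar : 1 ≤ σstar) :
    ∃ C > 0, ∃ μ ∈ Set.Ioo (0:ℝ) 1,
      ∀ (f g : EuclideanSpace ℝ (Fin 2) → ℂ) (δ : ℝ), 0 < δ →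
        MemLp f 2 volume →
        eLpNorm g 2 volume = eLpNorm f 2 volume →
        (∫⁻ ξ : EuclideanSpace ℝ (Fin 2),
            ENNReal.ofReal ((1 + ‖ξ‖ ^ 2) * ‖g ξ‖ ^ 2)) ≤ ENNReal.ofReal (M ^ 2) →
        (∀ σ > σstar, ∀ᵐ ξ : EuclideanSpace ℝ (Fin 2),
            ‖g ξ‖ ≤ C₀ * (1 + ‖ξ‖ ^ 2) ^ 4 * (σ ^ 6 * δ + σ ^ (-ε))) →
        eLpNorm f 2 volume ≤ ENNReal.ofReal (C * δ ^ μ) := by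
  obtain ⟨hε0, hε1⟩ := hε
  have h6ε : (0:ℝ) < 6 + ε := by linarith
  set μ : ℝ := ε / (10 * (6 + ε)) with hμdef
  have hμ0 : 0 < μ := by positivity
  have hμ1 : μ < 1 := by
    rw [hμdef, div_lt_one (by positivity)]; nlinarith
  set K₁ : ℝ := C₀ * ((σstar + 1) ^ 6 + 1) with hK₁
  have hK₁0 : 0 < K₁ := by positivity
  set C : ℝ := M + Real.sqrt (256 * Real.pi * K₁ ^ 2 + M ^ 2) with hC
  have hC0 : 0 < C := by positivity
  have hCsq : 256 * Real.pi * K₁ ^ 2 + M ^ 2 ≤ C ^ 2 := by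
    have h1 : 0 ≤ 256 * Real.pi * K₁ ^ 2 + M ^ 2 := by positivity
    nlinarith [Real.sq_sqrt h1, Real.sqrt_nonneg (256 * Real.pi * K₁ ^ 2 + M ^ 2)]
  have hMC : M ≤ C := by
    have := Real.sqrt_nonneg (256 * Real.pi * K₁ ^ 2 + M ^ 2)
    rw [hC]; linarith
  refine ⟨C, hC0, μ, ⟨hμ0, hμ1⟩, ?_⟩
  intro f g δ hδ hf hPl hI hσ
  rw [← hPl]
  -- pointwise rewriting of the squared enorm
  have hsq : ∀ x : ℂ, ‖x‖ₑ ^ (2:ℝ) = ENNReal.ofReal (‖x‖ ^ 2) := by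
    intro x
    rw [← ofReal_norm_eq_enorm,
      ENNReal.ofReal_rpow_of_nonneg (norm_nonneg x) (by norm_num)]
    congr 1
    rw [← Real.rpow_natCast ‖x‖ 2]
    norm_num
  -- key reduction: it suffices to bound the integral of |g|²
  have key : ∀ c : ℝ, 0 ≤ c →
      (∫⁻ ξ, ENNReal.ofReal (‖g ξ‖ ^ 2)) ≤ ENNReal.ofReal (c ^ 2) →
      eLpNorm g 2 volume ≤ ENNReal.ofReal c := by
    intro c hc h
    rw [eLpNorm_eq_lintegral_rpow_enorm_toReal (by norm_num) (by norm_num)]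
    have h2 : ((2:ℝ≥0∞)).toReal = (2:ℝ) := by norm_num
    rw [h2]
    have hcc : ENNReal.ofReal c = (ENNReal.ofReal (c ^ 2)) ^ (1 / (2:ℝ)) := by
      rw [ENNReal.ofReal_rpow_of_nonneg (by positivity) (by norm_num)]
      congr 1
      rw [← Real.rpow_natCast c 2, ← Real.rpow_mul hc]
      norm_num
    rw [hcc]
    apply ENNReal.rpow_le_rpow _ (by norm_num)
    simpa only [hsq] using h
  -- the basic weighted bound
  have hW : (∫⁻ ξ : EuclideanSpace ℝ (Fin 2), ENNReal.ofReal (‖g ξ‖ ^ 2))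
      ≤ ENNReal.ofReal (M ^ 2) := by
    refine le_trans (lintegral_mono fun ξ => ?_) hI
    exact ENNReal.ofReal_le_ofReal (by nlinarith [sq_nonneg ‖ξ‖, sq_nonneg ‖g ξ‖])
  rcases le_or_gt 1 δ with hδ1 | hδ1
  · -- trivial case δ ≥ 1
    have hδμ : 1 ≤ δ ^ μ := Real.one_le_rpow hδ1 hμ0.le
    refine key (C * δ ^ μ) (by positivity) (hW.trans (ENNReal.ofReal_le_ofReal ?_))
    have h1 : (1:ℝ) ≤ (δ ^ μ) ^ 2 := by nlinarith
    have h2 : M ^ 2 ≤ C ^ 2 := by nlinarith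
    calc M ^ 2 = M ^ 2 * 1 := by ring
      _ ≤ C ^ 2 * (δ ^ μ) ^ 2 := mul_le_mul h2 h1 zero_le_one (sq_nonneg C)
      _ = (C * δ ^ μ) ^ 2 := by ring
  · -- main case δ < 1
    set a : ℝ := 1 / (6 + ε) with ha
    have ha0 : 0 < a := by positivity
    have hδa1 : 1 ≤ δ ^ (-a) := by
      calc (1:ℝ) = δ ^ (0:ℝ) := (Real.rpow_zero δ).symm
        _ ≤ δ ^ (-a) := Real.rpow_le_rpow_of_exponent_ge hδ hδ1.le (by linarith)
    have hδapos : 0 < δ ^ (-a) := by positivity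
    set σ : ℝ := σstar + δ ^ (-a) with hσdef
    have hσgt : σstar < σ := lt_add_of_pos_right _ hδapos
    have hσpos : 0 < σ := by rw [hσdef]; linarith
    -- bound on σ⁶δ + σ^{-ε}
    have hσle : σ ≤ (σstar + 1) * δ ^ (-a) := by
      rw [hσdef]
      nlinarith [hδa1, hσstar]
    have h6a : (δ ^ (-a)) ^ 6 = δ ^ (-(6*a)) := by
      rw [← Real.rpow_natCast (δ ^ (-a)) 6, ← Real.rpow_mul hδ.le]
      norm_num
      ring_nf
    have hexp1 : δ ^ (-(6*a)) * δ = δ ^ (a * ε) := by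
      nth_rewrite 2 [← Real.rpow_one δ]
      rw [← Real.rpow_add hδ]
      congr 1
      rw [ha]
      field_simp
      ring
    have hterm1 : σ ^ 6 * δ ≤ (σstar + 1) ^ 6 * δ ^ (a * ε) := by
      have h1 : σ ^ 6 ≤ ((σstar + 1) * δ ^ (-a)) ^ 6 :=
        pow_le_pow_left₀ hσpos.le hσle 6
      have h2 : σ ^ 6 * δ ≤ ((σstar + 1) * δ ^ (-a)) ^ 6 * δ :=
        mul_le_mul_of_nonneg_right h1 hδ.le
      calc σ ^ 6 * δ ≤ ((σstar + 1) * δ ^ (-a)) ^ 6 * δ := h2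
        _ = (σstar + 1) ^ 6 * (δ ^ (-(6*a)) * δ) := by rw [mul_pow, h6a]; ring
        _ = (σstar + 1) ^ 6 * δ ^ (a * ε) := by rw [hexp1]
    have hterm2 : σ ^ (-ε) ≤ δ ^ (a * ε) := by
      have h1 : σ ^ (-ε) ≤ (δ ^ (-a)) ^ (-ε) := by
        apply Real.rpow_le_rpow_of_nonpos hδapos _ (by linarith)
        rw [hσdef]; linarith
      calc σ ^ (-ε) ≤ (δ ^ (-a)) ^ (-ε) := h1
        _ = δ ^ ((-a) * (-ε)) := (Real.rpow_mul hδ.le _ _).symm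
        _ = δ ^ (a * ε) := by ring_nf
    have hbd : ∀ᵐ ξ : EuclideanSpace ℝ (Fin 2),
        ‖g ξ‖ ≤ K₁ * (1 + ‖ξ‖ ^ 2) ^ 4 * δ ^ (a * ε) := by
      filter_upwards [hσ σ hσgt] with ξ hξ
      calc ‖g ξ‖ ≤ C₀ * (1 + ‖ξ‖ ^ 2) ^ 4 * (σ ^ 6 * δ + σ ^ (-ε)) := hξ
        _ ≤ C₀ * (1 + ‖ξ‖ ^ 2) ^ 4 * (((σstar + 1) ^ 6 + 1) * δ ^ (a * ε)) := by
            apply mul_le_mul_of_nonneg_left _ (by positivity)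
            rw [add_mul, one_mul]
            exact add_le_add hterm1 hterm2
        _ = K₁ * (1 + ‖ξ‖ ^ 2) ^ 4 * δ ^ (a * ε) := by rw [hK₁]; ring
    -- introduce D = δ^μ
    set D : ℝ := δ ^ μ with hD
    have hD0 : 0 < D := by positivity
    have hD1 : D ≤ 1 := by
      rw [hD]; exact Real.rpow_le_one hδ.le hδ1.le hμ0.le
    have hδaε : δ ^ (a * ε) = D ^ 10 := by
      rw [hD, ← Real.rpow_natCast (δ ^ μ) 10, ← Real.rpow_mul hδ.le]
      congr 1
      rw [ha, hμdef]
      field_simp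
      ring
    set L : ℝ := K₁ * (1 + (D⁻¹) ^ 2) ^ 4 * D ^ 10 with hL
    have hL0 : 0 ≤ L := by positivity
    set B : Set (EuclideanSpace ℝ (Fin 2)) := Metric.ball 0 (D⁻¹) with hB
    -- low frequency part
    have hvol : volume B = ENNReal.ofReal (Real.pi * (D⁻¹) ^ 2) := by
      rw [hB, EuclideanSpace.volume_ball]
      have hΓ : Real.Gamma ((Fintype.card (Fin 2)) / 2 + 1) = 1 := by
        simp only [Fintype.card_fin]
        rw [show ((2:ℕ):ℝ) / 2 + 1 = 1 + 1 by norm_num,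
          Real.Gamma_add_one one_ne_zero, Real.Gamma_one, mul_one]
      rw [hΓ]
      simp only [Fintype.card_fin, div_one]
      rw [Real.sq_sqrt Real.pi_pos.le,
        ← ENNReal.ofReal_pow (by positivity), ← ENNReal.ofReal_mul (by positivity)]
      ring_nf
    have hlow : (∫⁻ ξ in B, ENNReal.ofReal (‖g ξ‖ ^ 2))
        ≤ ENNReal.ofReal (L ^ 2 * (Real.pi * (D⁻¹) ^ 2)) := by
      have h1 : (∫⁻ ξ in B, ENNReal.ofReal (‖g ξ‖ ^ 2))
          ≤ ∫⁻ _ in B, ENNReal.ofReal (L ^ 2) := by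
        refine lintegral_mono_ae ((ae_restrict_iff' Metric.isOpen_ball.measurableSet).2 ?_)
        filter_upwards [hbd] with ξ hξ hmem
        apply ENNReal.ofReal_le_ofReal
        have hnorm : ‖ξ‖ < D⁻¹ := mem_ball_zero_iff.mp hmem
        have hgle : ‖g ξ‖ ≤ L := by
          rw [hδaε] at hξ
          refine hξ.trans ?_
          rw [hL]
          have h2 : (1 + ‖ξ‖ ^ 2) ^ 4 ≤ (1 + (D⁻¹) ^ 2) ^ 4 := by
            apply pow_le_pow_left₀ (by positivity)
            nlinarith [norm_nonneg ξ]
          exact mul_le_mul_of_nonneg_right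
            (mul_le_mul_of_nonneg_left h2 hK₁0.le) (pow_nonneg hD0.le 10)
        exact pow_le_pow_left₀ (norm_nonneg _) hgle 2
      rw [setLIntegral_const] at h1
      refine h1.trans ?_
      rw [hvol, ← ENNReal.ofReal_mul (by positivity)]
    -- high frequency part
    have hhigh : (∫⁻ ξ in Bᶜ, ENNReal.ofReal (‖g ξ‖ ^ 2))
        ≤ ENNReal.ofReal (D ^ 2 * M ^ 2) := by
      have hpt : ∀ ξ : EuclideanSpace ℝ (Fin 2), ξ ∈ Bᶜ →
          ENNReal.ofReal (‖g ξ‖ ^ 2)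
            ≤ ENNReal.ofReal (D ^ 2) * ENNReal.ofReal ((1 + ‖ξ‖ ^ 2) * ‖g ξ‖ ^ 2) := by
        intro ξ hmem
        rw [← ENNReal.ofReal_mul (by positivity)]
        apply ENNReal.ofReal_le_ofReal
        have hnorm : D⁻¹ ≤ ‖ξ‖ := by
          rw [hB, Set.mem_compl_iff, mem_ball_zero_iff, not_lt] at hmem
          exact hmem
        have h2 : (D⁻¹) ^ 2 ≤ ‖ξ‖ ^ 2 := pow_le_pow_left₀ (by positivity) hnorm 2
        have h1 : 1 ≤ D ^ 2 * (1 + ‖ξ‖ ^ 2) := by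
          have heq : D ^ 2 * (D⁻¹) ^ 2 = 1 := by field_simp
          have h3 : D ^ 2 * (D⁻¹) ^ 2 ≤ D ^ 2 * (1 + ‖ξ‖ ^ 2) :=
            mul_le_mul_of_nonneg_left (by linarith) (sq_nonneg D)
          linarith
        calc ‖g ξ‖ ^ 2 = 1 * ‖g ξ‖ ^ 2 := by ring
          _ ≤ (D ^ 2 * (1 + ‖ξ‖ ^ 2)) * ‖g ξ‖ ^ 2 :=
              mul_le_mul_of_nonneg_right h1 (sq_nonneg _)
          _ = D ^ 2 * ((1 + ‖ξ‖ ^ 2) * ‖g ξ‖ ^ 2) := by ring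
      calc (∫⁻ ξ in Bᶜ, ENNReal.ofReal (‖g ξ‖ ^ 2))
          ≤ ∫⁻ ξ in Bᶜ, ENNReal.ofReal (D ^ 2)
              * ENNReal.ofReal ((1 + ‖ξ‖ ^ 2) * ‖g ξ‖ ^ 2) := by
            refine lintegral_mono_ae
              ((ae_restrict_iff' Metric.isOpen_ball.measurableSet.compl).2 (ae_of_all _ hpt))
        _ = ENNReal.ofReal (D ^ 2)
              * ∫⁻ ξ in Bᶜ, ENNReal.ofReal ((1 + ‖ξ‖ ^ 2) * ‖g ξ‖ ^ 2) :=
            lintegral_const_mul' _ _ ENNReal.ofReal_ne_top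
        _ ≤ ENNReal.ofReal (D ^ 2) * ENNReal.ofReal (M ^ 2) := by
            exact mul_le_mul_right ((setLIntegral_le_lintegral _ _).trans hI) _
        _ = ENNReal.ofReal (D ^ 2 * M ^ 2) := by
            rw [← ENNReal.ofReal_mul (by positivity)]
    -- combine
    refine key (C * δ ^ μ) (by positivity) ?_
    calc (∫⁻ ξ, ENNReal.ofReal (‖g ξ‖ ^ 2))
        = (∫⁻ ξ in B, ENNReal.ofReal (‖g ξ‖ ^ 2))
          + ∫⁻ ξ in Bᶜ, ENNReal.ofReal (‖g ξ‖ ^ 2) :=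
          (lintegral_add_compl _ Metric.isOpen_ball.measurableSet).symm
      _ ≤ ENNReal.ofReal (L ^ 2 * (Real.pi * (D⁻¹) ^ 2))
          + ENNReal.ofReal (D ^ 2 * M ^ 2) := add_le_add hlow hhigh
      _ = ENNReal.ofReal (L ^ 2 * (Real.pi * (D⁻¹) ^ 2) + D ^ 2 * M ^ 2) :=
          (ENNReal.ofReal_add (by positivity) (by positivity)).symm
      _ ≤ ENNReal.ofReal ((C * δ ^ μ) ^ 2) := by
          apply ENNReal.ofReal_le_ofReal
          rw [← hD]
          -- final real inequality
          have hD2 : 1 ≤ (D⁻¹) ^ 2 := by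
            have h5 : 1 ≤ D⁻¹ := by
              nlinarith [mul_inv_cancel₀ hD0.ne', (inv_pos.mpr hD0).le, hD1]
            nlinarith
          have hLle : L ≤ 16 * K₁ * D ^ 2 := by
            rw [hL]
            have h1 : (1 + (D⁻¹) ^ 2) ^ 4 ≤ (2 * (D⁻¹) ^ 2) ^ 4 := by
              apply pow_le_pow_left₀ (by positivity)
              linarith
            have h2 : (2 * (D⁻¹) ^ 2) ^ 4 = 16 * (D⁻¹) ^ 8 := by ring
            have h3 : (D⁻¹) ^ 8 * D ^ 10 = D ^ 2 := by
              field_simp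
            calc K₁ * (1 + (D⁻¹) ^ 2) ^ 4 * D ^ 10
                ≤ K₁ * (16 * (D⁻¹) ^ 8) * D ^ 10 :=
                  mul_le_mul_of_nonneg_right
                    (mul_le_mul_of_nonneg_left (h2 ▸ h1) hK₁0.le) (pow_nonneg hD0.le 10)
              _ = 16 * K₁ * ((D⁻¹) ^ 8 * D ^ 10) := by ring
              _ = 16 * K₁ * D ^ 2 := by rw [h3]
          have hLsq : L ^ 2 ≤ 256 * K₁ ^ 2 * D ^ 4 := by
            calc L ^ 2 ≤ (16 * K₁ * D ^ 2) ^ 2 := pow_le_pow_left₀ hL0 hLle 2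
              _ = 256 * K₁ ^ 2 * D ^ 4 := by ring
          have hfin : L ^ 2 * (Real.pi * (D⁻¹) ^ 2) ≤ 256 * Real.pi * K₁ ^ 2 * D ^ 2 := by
            have h4 : D ^ 4 * (D⁻¹) ^ 2 = D ^ 2 := by
              field_simp
            calc L ^ 2 * (Real.pi * (D⁻¹) ^ 2)
                ≤ 256 * K₁ ^ 2 * D ^ 4 * (Real.pi * (D⁻¹) ^ 2) :=
                  mul_le_mul_of_nonneg_right hLsq (by positivity)
              _ = 256 * Real.pi * K₁ ^ 2 * (D ^ 4 * (D⁻¹) ^ 2) := by ring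
              _ = 256 * Real.pi * K₁ ^ 2 * D ^ 2 := by rw [h4]
          calc L ^ 2 * (Real.pi * (D⁻¹) ^ 2) + D ^ 2 * M ^ 2
              ≤ 256 * Real.pi * K₁ ^ 2 * D ^ 2 + D ^ 2 * M ^ 2 := by linarith
            _ = (256 * Real.pi * K₁ ^ 2 + M ^ 2) * D ^ 2 := by ring
            _ ≤ C ^ 2 * D ^ 2 := mul_le_mul_of_nonneg_right hCsq (sq_nonneg D)
            _ = (C * D) ^ 2 := by ring
end

section
/- Let R > 1 and let θ ∈ ℝ² be a unit vector. Let B : ℝ³ → ℝ² be bounded and measurable with B(x', x₃) = 0 whenever |x'| > R, and let φ₁, φ₂ ∈ L²(ℝ³; ℂ) satisfy φ_j(y', y₃) = 0 for almost every (y', y₃) with |y'| ≤ R or |y'| ≥ R + 1 (j = 1, 2). Then for every σ > 0 and every T > 0, σ · | ∫_0^T ∫_{ℝ³} ( θ·B(x', x₃) ) conj(φ₁(x' − 2σtθ, x₃)) φ₂(x' − 2σtθ, x₃) dx' dx₃ dt | ≤ (R + 1) (sup_{ℝ³} |B|) ‖φ₁‖_{L²(ℝ³)} ‖φ₂‖_{L²(ℝ³)}.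 -/
set_option maxHeartbeats 1000000


open MeasureTheory
open scoped RealInnerProductSpace

theorem stmt16
    (R : ℝ) (hR : 1 < R)
    (θ : EuclideanSpace ℝ (Fin 2)) (hθ : ‖θ‖ = 1)
    (B : EuclideanSpace ℝ (Fin 2) × ℝ → EuclideanSpace ℝ (Fin 2))
    (hBmeas : Measurable B) (hBbd : ∃ C, ∀ x, ‖B x‖ ≤ C)
    (hBsupp : ∀ x : EuclideanSpace ℝ (Fin 2) × ℝ, R < ‖x.1‖ → B x = 0)
    (φ₁ φ₂ : EuclideanSpace ℝ (Fin 2) × ℝ → ℂ)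
    (hφ₁ : MemLp φ₁ 2 volume) (hφ₂ : MemLp φ₂ 2 volume)
    (h₁ : ∀ᵐ y : EuclideanSpace ℝ (Fin 2) × ℝ, (‖y.1‖ ≤ R ∨ R + 1 ≤ ‖y.1‖) → φ₁ y = 0)
    (h₂ : ∀ᵐ y : EuclideanSpace ℝ (Fin 2) × ℝ, (‖y.1‖ ≤ R ∨ R + 1 ≤ ‖y.1‖) → φ₂ y = 0)
    (σ T : ℝ) (hσ : 0 < σ) (hT : 0 < T) :
    σ * ‖∫ t in Set.Ioc (0:ℝ) T, ∫ p : EuclideanSpace ℝ (Fin 2) × ℝ,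
          ((⟪θ, B p⟫ : ℝ) : ℂ)
            * (starRingEnd ℂ) (φ₁ (p.1 - (2 * σ * t) • θ, p.2))
            * φ₂ (p.1 - (2 * σ * t) • θ, p.2)‖
      ≤ (R + 1) * (⨆ x : EuclideanSpace ℝ (Fin 2) × ℝ, ‖B x‖)
          * Real.sqrt (∫ y : EuclideanSpace ℝ (Fin 2) × ℝ, ‖φ₁ y‖ ^ 2)
          * Real.sqrt (∫ y : EuclideanSpace ℝ (Fin 2) × ℝ, ‖φ₂ y‖ ^ 2) := by
  classical
  set C := ⨆ x : EuclideanSpace ℝ (Fin 2) × ℝ, ‖B x‖ with hCdef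
  obtain ⟨C₀, hC₀⟩ := hBbd
  have hbdd : BddAbove (Set.range fun x : EuclideanSpace ℝ (Fin 2) × ℝ => ‖B x‖) :=
    ⟨C₀, by rintro _ ⟨x, rfl⟩; exact hC₀ x⟩
  have hBC : ∀ x, ‖B x‖ ≤ C := fun x => le_ciSup hbdd x
  have hC0 : 0 ≤ C := le_trans (norm_nonneg _) (hBC 0)
  set M₁ := Real.sqrt (∫ y : EuclideanSpace ℝ (Fin 2) × ℝ, ‖φ₁ y‖ ^ 2) with hM₁def
  set M₂ := Real.sqrt (∫ y : EuclideanSpace ℝ (Fin 2) × ℝ, ‖φ₂ y‖ ^ 2) with hM₂def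
  have hM₁0 : 0 ≤ M₁ := Real.sqrt_nonneg _
  have hM₂0 : 0 ≤ M₂ := Real.sqrt_nonneg _
  -- Cauchy-Schwarz
  have h2ofReal : ENNReal.ofReal (2:ℝ) = 2 := by norm_num
  have hCS : (∫ y : EuclideanSpace ℝ (Fin 2) × ℝ, ‖φ₁ y‖ * ‖φ₂ y‖) ≤ M₁ * M₂ := by
    have hpq : (2:ℝ).HolderConjugate 2 := Real.HolderConjugate.two_two
    have hm1 : MemLp (fun y : EuclideanSpace ℝ (Fin 2) × ℝ => ‖φ₁ y‖)
        (ENNReal.ofReal 2) volume := by rw [h2ofReal]; exact hφ₁.norm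
    have hm2 : MemLp (fun y : EuclideanSpace ℝ (Fin 2) × ℝ => ‖φ₂ y‖)
        (ENNReal.ofReal 2) volume := by rw [h2ofReal]; exact hφ₂.norm
    have key := integral_mul_le_Lp_mul_Lq_of_nonneg hpq
      (Filter.Eventually.of_forall fun y => norm_nonneg (φ₁ y))
      (Filter.Eventually.of_forall fun y => norm_nonneg (φ₂ y)) hm1 hm2
    have hp2 : ∀ a : ℝ, a ^ (2:ℝ) = a ^ 2 := fun a => by
      rw [show ((2:ℝ)) = ((2:ℕ):ℝ) by norm_num, Real.rpow_natCast]
    simp_rw [hp2] at key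
    calc (∫ y : EuclideanSpace ℝ (Fin 2) × ℝ, ‖φ₁ y‖ * ‖φ₂ y‖)
        ≤ (∫ y : EuclideanSpace ℝ (Fin 2) × ℝ, ‖φ₁ y‖ ^ 2) ^ ((1:ℝ)/2)
          * (∫ y : EuclideanSpace ℝ (Fin 2) × ℝ, ‖φ₂ y‖ ^ 2) ^ ((1:ℝ)/2) := key
      _ = M₁ * M₂ := by rw [hM₁def, hM₂def, Real.sqrt_eq_rpow, Real.sqrt_eq_rpow]
  -- translations are measure preserving
  have hmp : ∀ v : EuclideanSpace ℝ (Fin 2),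
      MeasurePreserving (fun p : EuclideanSpace ℝ (Fin 2) × ℝ => (p.1 - v, p.2))
        volume volume := by
    intro v
    have h1 : MeasurePreserving (fun x : EuclideanSpace ℝ (Fin 2) => x - v) volume volume :=
      measurePreserving_sub_right volume v
    have h2 := h1.prod (MeasurePreserving.id (volume : Measure ℝ))
    rw [← Measure.volume_eq_prod] at h2
    exact h2
  have hemb : ∀ v : EuclideanSpace ℝ (Fin 2),
      MeasurableEmbedding (fun p : EuclideanSpace ℝ (Fin 2) × ℝ => (p.1 - v, p.2)) := fun v =>
    ((MeasurableEquiv.subRight v).prodCongr (MeasurableEquiv.refl ℝ)).measurableEmbedding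
  -- uniform bound on the inner integral
  have hinner : ∀ t : ℝ,
      ‖∫ p : EuclideanSpace ℝ (Fin 2) × ℝ,
          ((⟪θ, B p⟫ : ℝ) : ℂ)
            * (starRingEnd ℂ) (φ₁ (p.1 - (2 * σ * t) • θ, p.2))
            * φ₂ (p.1 - (2 * σ * t) • θ, p.2)‖ ≤ C * (M₁ * M₂) := by
    intro t
    set v : EuclideanSpace ℝ (Fin 2) := (2 * σ * t) • θ with hv
    have mp := hmp v
    have hφ₁t : MemLp (fun p : EuclideanSpace ℝ (Fin 2) × ℝ => φ₁ (p.1 - v, p.2)) 2 volume :=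
      hφ₁.comp_measurePreserving mp
    have hφ₂t : MemLp (fun p : EuclideanSpace ℝ (Fin 2) × ℝ => φ₂ (p.1 - v, p.2)) 2 volume :=
      hφ₂.comp_measurePreserving mp
    have hintg : Integrable (fun p : EuclideanSpace ℝ (Fin 2) × ℝ =>
        C * (‖φ₁ (p.1 - v, p.2)‖ * ‖φ₂ (p.1 - v, p.2)‖)) volume := by
      refine Integrable.const_mul ?_ C
      have hsq₁ : Integrable (fun p : EuclideanSpace ℝ (Fin 2) × ℝ =>
          ‖φ₁ (p.1 - v, p.2)‖ ^ 2) volume := hφ₁t.norm.integrable_sq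
      have hsq₂ : Integrable (fun p : EuclideanSpace ℝ (Fin 2) × ℝ =>
          ‖φ₂ (p.1 - v, p.2)‖ ^ 2) volume := hφ₂t.norm.integrable_sq
      refine Integrable.mono' (hsq₁.add hsq₂)
        (hφ₁t.norm.aestronglyMeasurable.mul hφ₂t.norm.aestronglyMeasurable)
        (Filter.Eventually.of_forall fun p => ?_)
      have h1 := norm_nonneg (φ₁ (p.1 - v, p.2))
      have h2 := norm_nonneg (φ₂ (p.1 - v, p.2))
      rw [Real.norm_of_nonneg (mul_nonneg h1 h2)]
      simp only [Pi.add_apply]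
      nlinarith [sq_nonneg (‖φ₁ (p.1 - v, p.2)‖ - ‖φ₂ (p.1 - v, p.2)‖)]
    calc ‖∫ p : EuclideanSpace ℝ (Fin 2) × ℝ,
          ((⟪θ, B p⟫ : ℝ) : ℂ)
            * (starRingEnd ℂ) (φ₁ (p.1 - v, p.2)) * φ₂ (p.1 - v, p.2)‖
        ≤ ∫ p : EuclideanSpace ℝ (Fin 2) × ℝ,
            ‖((⟪θ, B p⟫ : ℝ) : ℂ)
              * (starRingEnd ℂ) (φ₁ (p.1 - v, p.2)) * φ₂ (p.1 - v, p.2)‖ :=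
          norm_integral_le_integral_norm _
      _ ≤ ∫ p : EuclideanSpace ℝ (Fin 2) × ℝ,
            C * (‖φ₁ (p.1 - v, p.2)‖ * ‖φ₂ (p.1 - v, p.2)‖) := by
          refine integral_mono_of_nonneg
            (Filter.Eventually.of_forall fun p => norm_nonneg _) hintg
            (Filter.Eventually.of_forall fun p => ?_)
          have hb : ‖((⟪θ, B p⟫ : ℝ) : ℂ)‖ ≤ C := by
            rw [Complex.norm_real]
            calc ‖⟪θ, B p⟫‖ = |⟪θ, B p⟫| := rfl
              _ ≤ ‖θ‖ * ‖B p‖ := abs_real_inner_le_norm θ (B p)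
              _ = ‖B p‖ := by rw [hθ, one_mul]
              _ ≤ C := hBC p
          calc ‖((⟪θ, B p⟫ : ℝ) : ℂ)
                * (starRingEnd ℂ) (φ₁ (p.1 - v, p.2)) * φ₂ (p.1 - v, p.2)‖
              = ‖((⟪θ, B p⟫ : ℝ) : ℂ)‖ * ‖φ₁ (p.1 - v, p.2)‖ * ‖φ₂ (p.1 - v, p.2)‖ := by
                rw [norm_mul, norm_mul, RCLike.norm_conj]
            _ ≤ C * (‖φ₁ (p.1 - v, p.2)‖ * ‖φ₂ (p.1 - v, p.2)‖) := by
                rw [mul_assoc]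
                exact mul_le_mul_of_nonneg_right hb
                  (mul_nonneg (norm_nonneg _) (norm_nonneg _))
      _ = C * ∫ p : EuclideanSpace ℝ (Fin 2) × ℝ,
            ‖φ₁ (p.1 - v, p.2)‖ * ‖φ₂ (p.1 - v, p.2)‖ := integral_const_mul _ _
      _ = C * ∫ y : EuclideanSpace ℝ (Fin 2) × ℝ, ‖φ₁ y‖ * ‖φ₂ y‖ := by
          congr 1
          exact mp.integral_comp (hemb v)
            (fun y : EuclideanSpace ℝ (Fin 2) × ℝ => ‖φ₁ y‖ * ‖φ₂ y‖)
      _ ≤ C * (M₁ * M₂) := mul_le_mul_of_nonneg_left hCS hC0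
  -- vanishing for large times
  have hvan : ∀ t : ℝ, (2 * R + 1) / (2 * σ) ≤ t →
      (∫ p : EuclideanSpace ℝ (Fin 2) × ℝ,
          ((⟪θ, B p⟫ : ℝ) : ℂ)
            * (starRingEnd ℂ) (φ₁ (p.1 - (2 * σ * t) • θ, p.2))
            * φ₂ (p.1 - (2 * σ * t) • θ, p.2)) = 0 := by
    intro t ht
    have mp := hmp ((2 * σ * t) • θ)
    have hae := mp.quasiMeasurePreserving.ae h₁
    refine integral_eq_zero_of_ae ?_
    filter_upwards [hae] with p hp
    by_cases hx : R < ‖p.1‖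
    · rw [hBsupp p hx]; simp
    · push_neg at hx
      have ht' : 2 * R + 1 ≤ 2 * σ * t := by
        rw [div_le_iff₀ (by positivity)] at ht; linarith
      have htpos : 0 ≤ 2 * σ * t := by linarith
      have hnv : ‖(2 * σ * t) • θ‖ = 2 * σ * t := by
        rw [norm_smul, hθ, mul_one, Real.norm_of_nonneg htpos]
      have hkey : R + 1 ≤ ‖p.1 - (2 * σ * t) • θ‖ := by
        calc R + 1 ≤ 2 * σ * t - R := by linarith
          _ ≤ ‖(2 * σ * t) • θ‖ - ‖p.1‖ := by rw [hnv]; linarith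
          _ ≤ ‖(2 * σ * t) • θ - p.1‖ := norm_sub_norm_le _ _
          _ = ‖p.1 - (2 * σ * t) • θ‖ := norm_sub_rev _ _
      have h0 : φ₁ (p.1 - (2 * σ * t) • θ, p.2) = 0 := hp (Or.inr hkey)
      rw [h0]; simp
  -- assemble
  set t₀ : ℝ := (2 * R + 1) / (2 * σ) with ht₀def
  have ht₀pos : 0 < t₀ := div_pos (by linarith) (by linarith)
  set m : ℝ := min T t₀ with hmdef
  have hm0 : 0 < m := lt_min hT ht₀pos
  by_cases hint : IntegrableOn (fun t : ℝ => ∫ p : EuclideanSpace ℝ (Fin 2) × ℝ,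
      ((⟪θ, B p⟫ : ℝ) : ℂ)
        * (starRingEnd ℂ) (φ₁ (p.1 - (2 * σ * t) • θ, p.2))
        * φ₂ (p.1 - (2 * σ * t) • θ, p.2)) (Set.Ioc (0:ℝ) T) volume
  · have hsplit : Set.Ioc (0:ℝ) T = Set.Ioc 0 m ∪ Set.Ioc m T :=
      (Set.Ioc_union_Ioc_eq_Ioc (le_of_lt hm0) (min_le_left _ _)).symm
    have hdisj : Disjoint (Set.Ioc (0:ℝ) m) (Set.Ioc m T) := Set.Ioc_disjoint_Ioc_of_le le_rfl
    have hsub1 : Set.Ioc (0:ℝ) m ⊆ Set.Ioc (0:ℝ) T := Set.Ioc_subset_Ioc_right (min_le_left T t₀)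
    have hsub2 : Set.Ioc m T ⊆ Set.Ioc (0:ℝ) T := Set.Ioc_subset_Ioc_left (le_of_lt hm0)
    have hi1 := hint.mono_set hsub1
    have hi2 := hint.mono_set hsub2
    rw [hsplit, setIntegral_union hdisj measurableSet_Ioc hi1 hi2]
    have h2 : (∫ t in Set.Ioc m T, ∫ p : EuclideanSpace ℝ (Fin 2) × ℝ,
        ((⟪θ, B p⟫ : ℝ) : ℂ)
          * (starRingEnd ℂ) (φ₁ (p.1 - (2 * σ * t) • θ, p.2))
          * φ₂ (p.1 - (2 * σ * t) • θ, p.2)) = 0 := by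
      refine setIntegral_eq_zero_of_forall_eq_zero fun t ht => ?_
      rcases le_total t₀ T with h | h
      · rw [hmdef, min_eq_right h] at ht
        exact hvan t (le_of_lt ht.1)
      · exfalso
        rw [hmdef, min_eq_left h] at ht
        exact absurd ht.2 (not_le.mpr ht.1)
    rw [h2, add_zero]
    have hvol : (volume (Set.Ioc (0:ℝ) m)).toReal = m := by
      rw [Real.volume_Ioc, ENNReal.toReal_ofReal (by linarith), sub_zero]
    have hb : ‖∫ t in Set.Ioc (0:ℝ) m, ∫ p : EuclideanSpace ℝ (Fin 2) × ℝ,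
        ((⟪θ, B p⟫ : ℝ) : ℂ)
          * (starRingEnd ℂ) (φ₁ (p.1 - (2 * σ * t) • θ, p.2))
          * φ₂ (p.1 - (2 * σ * t) • θ, p.2)‖
        ≤ (C * (M₁ * M₂)) * (volume (Set.Ioc (0:ℝ) m)).toReal :=
      norm_setIntegral_le_of_norm_le_const
        (by rw [Real.volume_Ioc]; exact ENNReal.ofReal_lt_top)
        (fun t _ => hinner t)
    rw [hvol] at hb
    have hX : 0 ≤ C * (M₁ * M₂) := mul_nonneg hC0 (mul_nonneg hM₁0 hM₂0)
    have hmt₀ : m ≤ t₀ := min_le_right _ _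
    have hσt₀ : σ * t₀ = (2 * R + 1) / 2 := by
      rw [ht₀def]; field_simp
    calc σ * ‖∫ t in Set.Ioc (0:ℝ) m, ∫ p : EuclideanSpace ℝ (Fin 2) × ℝ,
          ((⟪θ, B p⟫ : ℝ) : ℂ)
            * (starRingEnd ℂ) (φ₁ (p.1 - (2 * σ * t) • θ, p.2))
            * φ₂ (p.1 - (2 * σ * t) • θ, p.2)‖
        ≤ σ * ((C * (M₁ * M₂)) * m) := mul_le_mul_of_nonneg_left hb (le_of_lt hσ)
      _ ≤ σ * ((C * (M₁ * M₂)) * t₀) := by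
          apply mul_le_mul_of_nonneg_left _ (le_of_lt hσ)
          exact mul_le_mul_of_nonneg_left hmt₀ hX
      _ = ((2 * R + 1) / 2) * (C * (M₁ * M₂)) := by
          rw [show σ * ((C * (M₁ * M₂)) * t₀) = (σ * t₀) * (C * (M₁ * M₂)) by ring, hσt₀]
      _ ≤ (R + 1) * C * M₁ * M₂ := by nlinarith
  · rw [integral_undef hint]
    rw [norm_zero, mul_zero]
    have hX : 0 ≤ C * (M₁ * M₂) := mul_nonneg hC0 (mul_nonneg hM₁0 hM₂0)
    nlinarith
end

section
/- Let A : ℝ³ → ℝ² be a C¹ map such that A and its derivative are bounded, let θ ∈ ℝ² be a unit vector, let L > 0, let j ∈ {1,2,3}, and let ψ : ℝ³ → ℂ be C¹ with compact support. Then ∫_{ℝ³} ∂_{x_j}(ψ²)(x) exp( −i ∫_0^L θ·A(x' + sθ, x₃) ds ) dx = i ∫_{ℝ³} ψ(x)² ( ∫_0^L θ·∂_{x_j}A(x' + sθ, x₃) ds ) exp( −i ∫_0^L θ·A(x' + sθ, x₃) ds ) dx, where ∂_{x_j}A denotes the componentwise partial derivative of A with respect to x_j evaluated at (x' + sθ,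 x₃). -/
open MeasureTheory
open scoped RealInnerProductSpace

/-- The three coordinate directions of `ℝ³ = ℝ² × ℝ`. -/
noncomputable def dir3 : Fin 3 → EuclideanSpace ℝ (Fin 2) × ℝ
  | 0 => (EuclideanSpace.single 0 1, 0)
  | 1 => (EuclideanSpace.single 1 1, 0)
  | 2 => (0, 1)

local notation "E3" => (EuclideanSpace ℝ (Fin 2) × ℝ)

set_option maxHeartbeats 1000000 in
theorem stmt17
    (A : EuclideanSpace ℝ (Fin 2) × ℝ → EuclideanSpace ℝ (Fin 2))
    (hA : ContDiff ℝ 1 A)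
    (hAbd : ∃ C, ∀ x, ‖A x‖ ≤ C ∧ ‖fderiv ℝ A x‖ ≤ C)
    (θ : EuclideanSpace ℝ (Fin 2)) (hθ : ‖θ‖ = 1)
    (L : ℝ) (hL : 0 < L) (j : Fin 3)
    (ψ : EuclideanSpace ℝ (Fin 2) × ℝ → ℂ)
    (hψ : ContDiff ℝ 1 ψ) (hψsupp : HasCompactSupport ψ) :
    ∫ p : EuclideanSpace ℝ (Fin 2) × ℝ,
        (fderiv ℝ (fun y => ψ y ^ 2) p (dir3 j))
          * Complex.exp (-Complex.I *
              ((∫ s in (0:ℝ)..L, ⟪θ, A (p.1 + s • θ, p.2)⟫ : ℝ) : ℂ))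
      = Complex.I * ∫ p : EuclideanSpace ℝ (Fin 2) × ℝ,
          ψ p ^ 2
            * ((∫ s in (0:ℝ)..L, ⟪θ, (fderiv ℝ A (p.1 + s • θ, p.2)) (dir3 j)⟫ : ℝ) : ℂ)
            * Complex.exp (-Complex.I *
                ((∫ s in (0:ℝ)..L, ⟪θ, A (p.1 + s • θ, p.2)⟫ : ℝ) : ℂ)) := by
  classical
  obtain ⟨C, hC⟩ := hAbd
  have hC0 : (0:ℝ) ≤ C := le_trans (norm_nonneg _) (hC 0).1
  have hAd : Differentiable ℝ A := hA.differentiable one_ne_zero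
  have hA' : Continuous (fderiv ℝ A) := hA.continuous_fderiv one_ne_zero
  -- translation maps
  have hTc : Continuous (fun q : E3 × ℝ => (q.1.1 + q.2 • θ, q.1.2) : E3 × ℝ → E3) := by
    fun_prop
  have hT : ∀ (s : ℝ) (p : E3), HasFDerivAt (fun q : E3 => ((q.1 + s • θ, q.2) : E3))
      (ContinuousLinearMap.id ℝ E3) p := by
    intro s p
    have heq : (fun q : E3 => ((q.1 + s • θ, q.2) : E3)) = fun q : E3 => q + ((s • θ, 0) : E3) := by
      funext q; simp [Prod.ext_iff, Prod.fst_add, Prod.snd_add]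
    rw [heq]
    simpa using (hasFDerivAt_id p).add_const ((s • θ, 0) : E3)
  -- derivative of the integrand
  set Fd : E3 → ℝ → (E3 →L[ℝ] ℝ) :=
    fun p s => (innerSL ℝ θ).comp (fderiv ℝ A (p.1 + s • θ, p.2)) with hFddef
  have hFd : ∀ (p : E3) (s : ℝ),
      HasFDerivAt (fun q : E3 => (⟪θ, A (q.1 + s • θ, q.2)⟫ : ℝ)) (Fd p s) p := by
    intro p s
    have h2 := ((hAd _).hasFDerivAt).comp p (hT s p)
    have h3 := ((innerSL ℝ θ).hasFDerivAt).comp p h2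
    simpa [Function.comp_def, ContinuousLinearMap.comp_id] using h3
  have hFdc : Continuous (fun q : E3 × ℝ => Fd q.1 q.2) :=
    Continuous.clm_comp continuous_const (hA'.comp hTc)
  have hFdbd : ∀ (p : E3) (s : ℝ), ‖Fd p s‖ ≤ C := by
    intro p s
    calc ‖Fd p s‖ ≤ ‖innerSL ℝ θ‖ * ‖fderiv ℝ A (p.1 + s • θ, p.2)‖ :=
          ContinuousLinearMap.opNorm_comp_le _ _
      _ ≤ 1 * C := by
          have := (hC (p.1 + s • θ, p.2)).2
          have hn : ‖innerSL ℝ θ‖ ≤ 1 := by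
            rw [innerSL_apply_norm, hθ]
          exact mul_le_mul hn this (norm_nonneg _) zero_le_one
      _ = C := one_mul C
  -- phase
  set φ : E3 → ℝ := fun p => ∫ s in (0:ℝ)..L, (⟪θ, A (p.1 + s • θ, p.2)⟫ : ℝ) with hφdef
  set D : E3 → (E3 →L[ℝ] ℝ) := fun p => ∫ s in (0:ℝ)..L, Fd p s with hDdef
  have hFcont : ∀ p : E3, Continuous (fun s : ℝ => (⟪θ, A (p.1 + s • θ, p.2)⟫ : ℝ)) := by
    intro p
    exact Continuous.inner continuous_const (hA.continuous.comp (by fun_prop))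
  have hφ : ∀ p : E3, HasFDerivAt φ (D p) p := by
    intro p
    apply intervalIntegral.hasFDerivAt_integral_of_dominated_of_fderiv_le
      (s := Set.univ) (bound := fun _ => C) Filter.univ_mem
    · exact Filter.Eventually.of_forall fun x => (hFcont x).aestronglyMeasurable
    · exact (hFcont p).intervalIntegrable _ _
    · exact ((hFdc.comp (Continuous.prodMk_right p)).aestronglyMeasurable)
    · exact Filter.Eventually.of_forall fun t _ x _ => hFdbd x t
    · exact intervalIntegrable_const
    · exact Filter.Eventually.of_forall fun t _ x _ => hFd x t
  have hφc : Continuous φ := by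
    rw [continuous_iff_continuousAt]; exact fun p => (hφ p).continuousAt
  have hDint : ∀ p : E3, IntervalIntegrable (fun s => Fd p s) volume 0 L :=
    fun p => ((hFdc.comp (Continuous.prodMk_right p)).intervalIntegrable _ _)
  have hDapply : ∀ p : E3, D p (dir3 j)
      = ∫ s in (0:ℝ)..L, (⟪θ, (fderiv ℝ A (p.1 + s • θ, p.2)) (dir3 j)⟫ : ℝ) := by
    intro p
    rw [hDdef]
    rw [ContinuousLinearMap.intervalIntegral_apply (hDint p) (dir3 j)]
    rfl
  have hDjc : Continuous (fun p : E3 => D p (dir3 j)) := by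
    simp only [hDapply]
    exact intervalIntegral.continuous_parametric_intervalIntegral_of_continuous'
      (f := fun (p : E3) (s : ℝ) => (⟪θ, (fderiv ℝ A (p.1 + s • θ, p.2)) (dir3 j)⟫ : ℝ))
      (Continuous.inner continuous_const ((hA'.comp hTc).clm_apply continuous_const)) 0 L
  -- exponential
  set g : E3 → ℂ := fun p => Complex.exp (-Complex.I * (φ p : ℂ)) with hgdef
  set G' : E3 → (E3 →L[ℝ] ℂ) := fun p =>
    Complex.exp (-Complex.I * (φ p : ℂ)) • ((-Complex.I) • (Complex.ofRealCLM.comp (D p)))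
    with hG'def
  have hg : ∀ p : E3, HasFDerivAt g (G' p) p := by
    intro p
    have h1 : HasFDerivAt (fun q : E3 => ((φ q : ℝ) : ℂ)) (Complex.ofRealCLM.comp (D p)) p :=
      Complex.ofRealCLM.hasFDerivAt.comp p (hφ p)
    have h2 := h1.const_mul (-Complex.I)
    exact h2.cexp
  have hgc : Continuous g := by fun_prop
  have hG'apply : ∀ p : E3, G' p (dir3 j)
      = Complex.exp (-Complex.I * (φ p : ℂ)) * (-Complex.I * ((D p (dir3 j) : ℝ) : ℂ)) := by
    intro p
    simp [hG'def, smul_eq_mul, mul_assoc]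
  have hG'jc : Continuous (fun p : E3 => G' p (dir3 j)) := by
    simp only [hG'apply]
    fun_prop
  -- the squared function
  set f : E3 → ℂ := fun p => ψ p ^ 2 with hfdef
  have hf : ContDiff ℝ 1 f := hψ.pow 2
  have hfsupp : HasCompactSupport f := by
    have := hψsupp.comp_left (g := fun z : ℂ => z ^ 2) (by simp)
    simpa [Function.comp_def] using this
  have hfc : Continuous f := hf.continuous
  have hf'c : Continuous (fun p : E3 => fderiv ℝ f p (dir3 j)) :=
    (hf.continuous_fderiv one_ne_zero).clm_apply continuous_const
  have hf'supp : HasCompactSupport (fun p : E3 => fderiv ℝ f p (dir3 j)) :=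
    (hfsupp.fderiv ℝ).comp_left (g := fun M : E3 →L[ℝ] ℂ => M (dir3 j)) (by simp)
  -- integrability
  have hf'g : Integrable (fun x : E3 => fderiv ℝ f x (dir3 j) * g x) (volume : Measure E3) :=
    ((hf'c.mul hgc)).integrable_of_hasCompactSupport (hf'supp.mul_right)
  have hfg' : Integrable (fun x : E3 => f x * G' x (dir3 j)) volume :=
    ((hfc.mul hG'jc)).integrable_of_hasCompactSupport (hfsupp.mul_right)
  have hfg : Integrable (fun x : E3 => f x * g x) volume :=
    ((hfc.mul hgc)).integrable_of_hasCompactSupport (hfsupp.mul_right)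
  -- integration by parts
  haveI : (volume : Measure E3).IsAddHaarMeasure :=
    (inferInstance : (((volume : Measure (EuclideanSpace ℝ (Fin 2))).prod (volume : Measure ℝ))).IsAddHaarMeasure)
  have key := integral_bilinear_hasFDerivAt_right_eq_neg_left_of_integrable
    (μ := (volume : Measure E3)) (B := ContinuousLinearMap.mul ℝ ℂ)
    (f := f) (f' := fun p => fderiv ℝ f p) (g := g) (g' := G') (v := dir3 j)
    (by simpa using hf'g) (by simpa using hfg') (by simpa using hfg)
    (fun x _ => (hf.differentiable one_ne_zero x).hasFDerivAt) (fun x _ => hg x)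
  simp only [ContinuousLinearMap.mul_apply'] at key
  have lhs_eq : (∫ p : E3, (fderiv ℝ (fun y => ψ y ^ 2) p (dir3 j))
      * Complex.exp (-Complex.I * ((φ p : ℝ) : ℂ)))
      = - ∫ x : E3, f x * G' x (dir3 j) := by
    rw [key, neg_neg]
  rw [lhs_eq]
  rw [← MeasureTheory.integral_neg]
  have : ∀ x : E3, -(f x * G' x (dir3 j))
      = Complex.I * (f x * ((D x (dir3 j) : ℝ) : ℂ)
          * Complex.exp (-Complex.I * ((φ x : ℝ) : ℂ))) := by
    intro x
    rw [hG'apply]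
    ring
  simp only [this]
  rw [MeasureTheory.integral_const_mul]
  congr 1
  apply MeasureTheory.integral_congr_ae
  filter_upwards with x
  rw [hDapply]
end

section
/- Let R > 1, T > 0, let θ ∈ ℝ² be a unit vector, and let σ ≥ (R + 1)/T. Let q : ℝ³ → ℂ be bounded and measurable with q(y', y₃) = 0 whenever |y'| > R, and let φ : ℝ³ → ℂ be continuous with compact support such that φ(y', y₃) = 0 unless R < |y'| < R + 1 and y'·θ ≤ 0. Then ∫_0^T ∫_{ℝ³} q(y', y₃) φ(y' − 2σtθ, y₃)² dy' dy₃ dt = (2σ)^{−1} ∫_{ℝ³} ( ∫_ℝ q(y' + sθ, y₃) ds ) φ(y', y₃)² dy' dy₃. -/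
open MeasureTheory
open scoped RealInnerProductSpace

theorem stmt18
    (R T σ : ℝ) (hR : 1 < R) (hT : 0 < T) (hσ : (R + 1) / T ≤ σ)
    (θ : EuclideanSpace ℝ (Fin 2)) (hθ : ‖θ‖ = 1)
    (q : EuclideanSpace ℝ (Fin 2) × ℝ → ℂ)
    (hqmeas : Measurable q) (hqbd : ∃ C, ∀ y, ‖q y‖ ≤ C)
    (hqsupp : ∀ y : EuclideanSpace ℝ (Fin 2) × ℝ, R < ‖y.1‖ → q y = 0)
    (φ : EuclideanSpace ℝ (Fin 2) × ℝ → ℂ)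
    (hφcont : Continuous φ) (hφsupp : HasCompactSupport φ)
    (hφ : ∀ y : EuclideanSpace ℝ (Fin 2) × ℝ,
      ¬(R < ‖y.1‖ ∧ ‖y.1‖ < R + 1 ∧ ⟪y.1, θ⟫ ≤ 0) → φ y = 0) :
    ∫ t in Set.Ioc (0:ℝ) T, ∫ y : EuclideanSpace ℝ (Fin 2) × ℝ,
        q y * φ (y.1 - (2 * σ * t) • θ, y.2) ^ 2
      = (((2 * σ : ℝ)) : ℂ)⁻¹ * ∫ y : EuclideanSpace ℝ (Fin 2) × ℝ,
          (∫ s : ℝ, q (y.1 + s • θ, y.2)) * φ y ^ 2 := by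
  haveI : (volume : Measure (EuclideanSpace ℝ (Fin 2) × ℝ)).IsAddRightInvariant := by
    rw [Measure.volume_eq_prod]; infer_instance
  have hσ0 : 0 < σ := lt_of_lt_of_le (div_pos (by linarith) hT) hσ
  have h2σ : (2 * σ) ≠ 0 := by positivity
  have hσT : 2 * (R + 1) ≤ 2 * σ * T := by
    have := (div_le_iff₀ hT).mp hσ
    nlinarith
  -- pointwise vanishing of the shifted integrand for bad s
  have hzero : ∀ s : ℝ, s ≤ 0 ∨ 2 * (R + 1) ≤ s →
      ∀ y : EuclideanSpace ℝ (Fin 2) × ℝ, q (y.1 + s • θ, y.2) * φ y ^ 2 = 0 := by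
    intro s hs y
    by_cases hy : R < ‖y.1‖ ∧ ‖y.1‖ < R + 1 ∧ ⟪y.1, θ⟫ ≤ 0
    · have hq0 : q (y.1 + s • θ, y.2) = 0 := by
        apply hqsupp (y.1 + s • θ, y.2)
        show R < ‖y.1 + s • θ‖
        rcases hs with hs | hs
        · have h1 : ⟪y.1, s • θ⟫ = s * ⟪y.1, θ⟫ := real_inner_smul_right _ _ _
          have h2 : (0:ℝ) ≤ s * ⟪y.1, θ⟫ := by nlinarith [hy.2.2]
          have h4 : R ^ 2 < ‖y.1 + s • θ‖ ^ 2 := by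
            rw [norm_add_sq_real, h1]
            nlinarith [sq_nonneg ‖s • θ‖, hy.1, norm_nonneg y.1]
          exact lt_of_pow_lt_pow_left₀ 2 (norm_nonneg _) h4
        · have h1 : ‖s • θ‖ = s := by
            rw [norm_smul, hθ, mul_one, Real.norm_eq_abs, abs_of_nonneg (by nlinarith)]
          have h2 : ‖s • θ‖ - ‖y.1‖ ≤ ‖y.1 + s • θ‖ := by
            have h := norm_sub_le (y.1 + s • θ) y.1
            simp only [add_sub_cancel_left] at h
            linarith
          linarith [hy.2.1]
      simp [hq0]
    · simp [hφ y hy]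
  -- translation invariance
  have hA : ∀ c : ℝ,
      (∫ y : EuclideanSpace ℝ (Fin 2) × ℝ, q y * φ (y.1 - c • θ, y.2) ^ 2)
        = ∫ y : EuclideanSpace ℝ (Fin 2) × ℝ, q (y.1 + c • θ, y.2) * φ y ^ 2 := by
    intro c
    have key := integral_add_right_eq_self (μ := volume)
      (fun y : EuclideanSpace ℝ (Fin 2) × ℝ => q y * φ (y.1 - c • θ, y.2) ^ 2)
      ((c • θ, (0:ℝ)) : EuclideanSpace ℝ (Fin 2) × ℝ)
    rw [← key]
    congr 1
    funext y
    have hyadd : y + ((c • θ, (0:ℝ)) : EuclideanSpace ℝ (Fin 2) × ℝ)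
        = (y.1 + c • θ, y.2) := by
      ext <;> simp [Prod.fst_add, Prod.snd_add]
    rw [hyadd]
    simp
  -- integrability on the product
  have hGint : Integrable (Function.uncurry fun (s : ℝ)
      (y : EuclideanSpace ℝ (Fin 2) × ℝ) => q (y.1 + s • θ, y.2) * φ y ^ 2)
      ((volume : Measure ℝ).prod volume) := by
    obtain ⟨C, hC⟩ := hqbd
    obtain ⟨M, hM⟩ := hφsupp.exists_bound_of_continuous hφcont
    have hC0 : 0 ≤ C := le_trans (norm_nonneg _) (hC 0)
    have hM0 : 0 ≤ M := le_trans (norm_nonneg _) (hM 0)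
    set G := Function.uncurry fun (s : ℝ) (y : EuclideanSpace ℝ (Fin 2) × ℝ) =>
        q (y.1 + s • θ, y.2) * φ y ^ 2 with hG
    have hmeas : AEStronglyMeasurable G ((volume : Measure ℝ).prod volume) := by
      apply Measurable.aestronglyMeasurable
      apply Measurable.mul
      · exact hqmeas.comp (by fun_prop)
      · exact ((hφcont.comp continuous_snd).pow 2).measurable
    set K : Set (ℝ × (EuclideanSpace ℝ (Fin 2) × ℝ)) :=
      Set.Icc (-(2*R+1)) (2*R+1) ×ˢ tsupport φ with hK
    have hKc : IsCompact K := (isCompact_Icc).prod hφsupp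
    have hbd : ∀ p, ‖G p‖ ≤ K.indicator (fun _ => C * M ^ 2) p := by
      intro p
      by_cases hp : p ∈ K
      · rw [Set.indicator_of_mem hp]
        calc ‖G p‖ = ‖q (p.2.1 + p.1 • θ, p.2.2)‖ * ‖φ p.2‖ ^ 2 := by
                simp [hG, Function.uncurry, norm_mul, norm_pow]
          _ ≤ C * M ^ 2 := by
                apply mul_le_mul (hC _) (pow_le_pow_left₀ (norm_nonneg _) (hM _) 2)
                  (by positivity) hC0
      · rw [Set.indicator_of_notMem hp]
        have : G p = 0 := by
          rcases Classical.em (φ p.2 = 0) with h0 | h0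
          · simp [hG, Function.uncurry, h0]
          · have hmem2 : p.2 ∈ tsupport φ := subset_closure (by simpa using h0)
            have hy : R < ‖p.2.1‖ ∧ ‖p.2.1‖ < R + 1 ∧ ⟪p.2.1, θ⟫ ≤ 0 := by
              by_contra hcon; exact h0 (hφ _ hcon)
            have hq0 : q (p.2.1 + p.1 • θ, p.2.2) = 0 := by
              apply hqsupp (p.2.1 + p.1 • θ, p.2.2)
              show R < ‖p.2.1 + p.1 • θ‖
              have hp1 : ¬ p.1 ∈ Set.Icc (-(2*R+1)) (2*R+1) := by
                intro hmem; exact hp ⟨hmem, hmem2⟩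
              have habs : 2*R+1 < |p.1| := by
                rw [Set.mem_Icc] at hp1
                cases not_and_or.mp hp1 with
                | inl h => rw [abs_of_neg (by linarith [not_le.mp h])]; linarith [not_le.mp h]
                | inr h => rw [abs_of_pos (by linarith [not_le.mp h])]; linarith [not_le.mp h]
              have h1 : ‖p.1 • θ‖ = |p.1| := by rw [norm_smul, hθ, mul_one, Real.norm_eq_abs]
              have h2 : |p.1| - ‖p.2.1‖ ≤ ‖p.2.1 + p.1 • θ‖ := by
                have h := norm_sub_le (p.2.1 + p.1 • θ) p.2.1
                simp only [add_sub_cancel_left] at h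
                linarith [h1 ▸ h]
              linarith [hy.2.1]
            simp [hG, Function.uncurry, hq0]
        simp [this]
    have hKfin : (volume.prod volume) K < ⊤ := by
      rw [← Measure.volume_eq_prod]; exact hKc.measure_lt_top
    have hind : Integrable (K.indicator fun _ => C * M ^ 2) ((volume : Measure ℝ).prod volume) :=
      (integrableOn_const (C := C * M ^ 2) hKfin.ne).integrable_indicator hKc.measurableSet
    exact Integrable.mono' hind hmeas (Filter.Eventually.of_forall hbd)
  -- vanishing of the full inner integral off Ioc 0 (2σT)
  have hF0 : ∀ s ∉ Set.Ioc (0:ℝ) (2 * σ * T),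
      (∫ y : EuclideanSpace ℝ (Fin 2) × ℝ, q (y.1 + s • θ, y.2) * φ y ^ 2) = 0 := by
    intro s hs
    rw [Set.mem_Ioc, not_and_or] at hs
    have hs' : s ≤ 0 ∨ 2 * (R + 1) ≤ s := by
      rcases hs with h | h
      · exact Or.inl (not_lt.mp h)
      · exact Or.inr (le_trans hσT (not_le.mp h).le)
    simp only [hzero s hs']
    exact integral_zero _ _
  calc
    (∫ t in Set.Ioc (0:ℝ) T, ∫ y : EuclideanSpace ℝ (Fin 2) × ℝ,
        q y * φ (y.1 - (2 * σ * t) • θ, y.2) ^ 2)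
      = ∫ t in Set.Ioc (0:ℝ) T, ∫ y : EuclideanSpace ℝ (Fin 2) × ℝ,
          q (y.1 + (2 * σ * t) • θ, y.2) * φ y ^ 2 := by
        simp only [hA]
    _ = ∫ t in (0:ℝ)..T, (fun s => ∫ y : EuclideanSpace ℝ (Fin 2) × ℝ,
          q (y.1 + s • θ, y.2) * φ y ^ 2) (2 * σ * t) := by
        rw [intervalIntegral.integral_of_le hT.le]
    _ = (2*σ)⁻¹ • ∫ s in (2*σ*0)..(2*σ*T), ∫ y : EuclideanSpace ℝ (Fin 2) × ℝ,
          q (y.1 + s • θ, y.2) * φ y ^ 2 :=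
        intervalIntegral.integral_comp_mul_left
          (fun s => ∫ y : EuclideanSpace ℝ (Fin 2) × ℝ, q (y.1 + s • θ, y.2) * φ y ^ 2) h2σ
    _ = (2*σ)⁻¹ • ∫ s in Set.Ioc (0:ℝ) (2*σ*T), ∫ y : EuclideanSpace ℝ (Fin 2) × ℝ,
          q (y.1 + s • θ, y.2) * φ y ^ 2 := by
        rw [mul_zero, intervalIntegral.integral_of_le (by positivity)]
    _ = (2*σ)⁻¹ • ∫ s : ℝ, ∫ y : EuclideanSpace ℝ (Fin 2) × ℝ,
          q (y.1 + s • θ, y.2) * φ y ^ 2 := by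
        rw [setIntegral_eq_integral_of_forall_compl_eq_zero hF0]
    _ = (2*σ)⁻¹ • ∫ y : EuclideanSpace ℝ (Fin 2) × ℝ, ∫ s : ℝ,
          q (y.1 + s • θ, y.2) * φ y ^ 2 := by
        rw [integral_integral_swap hGint]
    _ = (2*σ)⁻¹ • ∫ y : EuclideanSpace ℝ (Fin 2) × ℝ,
          (∫ s : ℝ, q (y.1 + s • θ, y.2)) * φ y ^ 2 := by
        simp only [integral_mul_const]
    _ = (((2 * σ : ℝ)) : ℂ)⁻¹ * ∫ y : EuclideanSpace ℝ (Fin 2) × ℝ,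
          (∫ s : ℝ, q (y.1 + s • θ, y.2)) * φ y ^ 2 := by
        rw [Complex.real_smul, Complex.ofReal_inv]
end

section
/- Let R > 0, let A : ℝ³ → ℝ² be a C¹ map such that A and its derivative are bounded and A(x', x₃) = 0 whenever |x'| ≥ R, and let θ ∈ ℝ² be a unit vector. Define g(y', y₃) := ∫_ℝ θ·A(y' + sθ, y₃) ds. Then g is differentiable with respect to y' at every point and θ·∇_{y'} g(y', y₃) = 0 for every (y', y₃) ∈ ℝ² × ℝ. -/
set_option maxHeartbeats 1000000


open MeasureTheory
open scoped RealInnerProductSpace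

theorem stmt19
    (R : ℝ) (hR : 0 < R)
    (A : EuclideanSpace ℝ (Fin 2) × ℝ → EuclideanSpace ℝ (Fin 2))
    (hA : ContDiff ℝ 1 A)
    (hAbd : ∃ C, ∀ x, ‖A x‖ ≤ C ∧ ‖fderiv ℝ A x‖ ≤ C)
    (hAsupp : ∀ x : EuclideanSpace ℝ (Fin 2) × ℝ, R ≤ ‖x.1‖ → A x = 0)
    (θ : EuclideanSpace ℝ (Fin 2)) (hθ : ‖θ‖ = 1)
    (g : EuclideanSpace ℝ (Fin 2) → ℝ → ℝ)
    (hg : ∀ (y' : EuclideanSpace ℝ (Fin 2)) (y₃ : ℝ),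
      g y' y₃ = ∫ s : ℝ, ⟪θ, A (y' + s • θ, y₃)⟫) :
    ∀ (y' : EuclideanSpace ℝ (Fin 2)) (y₃ : ℝ),
      DifferentiableAt ℝ (fun z => g z y₃) y' ∧
      fderiv ℝ (fun z => g z y₃) y' θ = 0 := by
  obtain ⟨C, hC⟩ := hAbd
  intro y' y₃
  have hC0 : 0 ≤ C := le_trans (norm_nonneg _) (hC (y', y₃)).1
  have hAd : Differentiable ℝ A := hA.differentiable one_ne_zero
  -- the integrand and its x-derivative
  set F : EuclideanSpace ℝ (Fin 2) → ℝ → ℝ := fun x s => ⟪θ, A (x + s • θ, y₃)⟫ with hFdef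
  set F' : EuclideanSpace ℝ (Fin 2) → ℝ → (EuclideanSpace ℝ (Fin 2)) →L[ℝ] ℝ := fun x s =>
    (innerSL ℝ θ).comp ((fderiv ℝ A (x + s • θ, y₃)).comp
      ((ContinuousLinearMap.id ℝ (EuclideanSpace ℝ (Fin 2))).prod 0)) with hF'def
  have hlinecont : ∀ x : EuclideanSpace ℝ (Fin 2),
      Continuous fun s : ℝ => (x + s • θ, y₃) := fun x =>
    (continuous_const.add (continuous_id.smul continuous_const)).prodMk continuous_const
  have hmap : ∀ (s : ℝ) (x : EuclideanSpace ℝ (Fin 2)),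
      HasFDerivAt (fun x : EuclideanSpace ℝ (Fin 2) => (x + s • θ, y₃))
        ((ContinuousLinearMap.id ℝ (EuclideanSpace ℝ (Fin 2))).prod 0) x := fun s x =>
    ((hasFDerivAt_id x).add_const (s • θ)).prodMk (hasFDerivAt_const y₃ x)
  have hdiff : ∀ (s : ℝ) (x), HasFDerivAt (fun x => F x s) (F' x s) x := by
    intro s x
    have h1 : HasFDerivAt A (fderiv ℝ A (x + s • θ, y₃)) (x + s • θ, y₃) :=
      (hAd _).hasFDerivAt
    have h2 := (innerSL ℝ θ).hasFDerivAt.comp x (h1.comp x (hmap s x))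
    simpa [hFdef, hF'def, Function.comp_def] using h2
  -- norm bound on F'
  have hnorm : ∀ (x : EuclideanSpace ℝ (Fin 2)) (s : ℝ), ‖F' x s‖ ≤ C := by
    intro x s
    apply ContinuousLinearMap.opNorm_le_bound _ hC0
    intro v
    have : F' x s v = ⟪θ, fderiv ℝ A (x + s • θ, y₃) (v, 0)⟫ := by
      simp [hF'def]
    rw [this]
    calc ‖⟪θ, fderiv ℝ A (x + s • θ, y₃) (v, 0)⟫‖
        ≤ ‖θ‖ * ‖fderiv ℝ A (x + s • θ, y₃) (v, 0)‖ := norm_inner_le_norm _ _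
      _ ≤ 1 * (‖fderiv ℝ A (x + s • θ, y₃)‖ * ‖((v, 0) : EuclideanSpace ℝ (Fin 2) × ℝ)‖) := by
          rw [hθ]; exact mul_le_mul_of_nonneg_left ((fderiv ℝ A _).le_opNorm _) zero_le_one
      _ ≤ C * ‖v‖ := by
          rw [one_mul]
          have h1 : ‖((v, 0) : EuclideanSpace ℝ (Fin 2) × ℝ)‖ = ‖v‖ := by
            simp [Prod.norm_def]
          rw [h1]
          exact mul_le_mul_of_nonneg_right (hC _).2 (norm_nonneg _)
  -- fderiv of A vanishes far out
  have hfd0 : ∀ p : EuclideanSpace ℝ (Fin 2) × ℝ, R < ‖p.1‖ → fderiv ℝ A p = 0 := by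
    intro p hp
    have hopen : IsOpen {q : EuclideanSpace ℝ (Fin 2) × ℝ | R < ‖q.1‖} :=
      isOpen_lt continuous_const (continuous_norm.comp continuous_fst)
    have hev : A =ᶠ[nhds p] fun _ => (0 : EuclideanSpace ℝ (Fin 2)) := by
      filter_upwards [hopen.mem_nhds hp] with q hq
      exact hAsupp q hq.le
    rw [hev.fderiv_eq, fderiv_const_apply]
  -- lower bound on the norm along the line
  have hline : ∀ (x : EuclideanSpace ℝ (Fin 2)) (s : ℝ), |s| - ‖x‖ ≤ ‖x + s • θ‖ := by
    intro x s
    have : ‖s • θ‖ ≤ ‖x + s • θ‖ + ‖x‖ := by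
      calc ‖s • θ‖ = ‖(x + s • θ) - x‖ := by congr 1; abel
        _ ≤ ‖x + s • θ‖ + ‖x‖ := norm_sub_le _ _
    rw [norm_smul, hθ, mul_one, Real.norm_eq_abs] at this
    linarith
  set M : ℝ := ‖y'‖ + 1 + R with hMdef
  set bound : ℝ → ℝ := Set.indicator (Set.Icc (-M) M) (fun _ => C) with hbddef
  -- differentiation under the integral sign
  have key : HasFDerivAt (fun x => ∫ s : ℝ, F x s) (∫ s : ℝ, F' y' s) y' := by
    apply hasFDerivAt_integral_of_dominated_of_fderiv_le (bound := bound) (Metric.ball_mem_nhds y' one_pos)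
    · refine Filter.Eventually.of_forall fun x => Continuous.aestronglyMeasurable ?_
      exact (innerSL ℝ θ).continuous.comp (hA.continuous.comp (hlinecont x))
    · -- integrability of F y'
      have hcont : Continuous (F y') :=
        (innerSL ℝ θ).continuous.comp (hA.continuous.comp (hlinecont y'))
      have hsupp : HasCompactSupport (F y') := by
        apply HasCompactSupport.intro (isCompact_Icc (a := -(‖y'‖ + R)) (b := ‖y'‖ + R))
        intro s hs
        have habs : ‖y'‖ + R < |s| := by
          rcases abs_cases s with ⟨h1, h2⟩ <;> simp only [Set.mem_Icc, not_and_or, not_le] at hs <;>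
            rcases hs with h | h <;> linarith
        have : R < ‖y' + s • θ‖ := lt_of_lt_of_le (by linarith [hline y' s]) le_rfl
        have hz : A (y' + s • θ, y₃) = 0 := hAsupp _ this.le
        simp [hFdef, hz]
      exact hcont.integrable_of_hasCompactSupport hsupp
    · -- measurability of F' y'
      refine Continuous.aestronglyMeasurable ?_
      exact continuous_const.clm_comp
        (((hA.continuous_fderiv one_ne_zero).comp (hlinecont y')).clm_comp continuous_const)
    · -- the bound
      refine Filter.Eventually.of_forall fun s => fun x hx => ?_
      by_cases hs : s ∈ Set.Icc (-M) M
      · rw [hbddef, Set.indicator_of_mem hs]; exact hnorm x s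
      · rw [hbddef, Set.indicator_of_notMem hs]
        have habs : M < |s| := by
          rcases abs_cases s with ⟨h1, h2⟩ <;> simp only [Set.mem_Icc, not_and_or, not_le] at hs <;>
            rcases hs with h | h <;> linarith
        have hxn : ‖x‖ < ‖y'‖ + 1 := by
          have h1 : ‖x‖ - ‖y'‖ ≤ ‖x - y'‖ := norm_sub_norm_le x y'
          have h2 : ‖x - y'‖ < 1 := mem_ball_iff_norm.mp hx
          linarith
        have hfar : R < ‖x + s • θ‖ := by
          have := hline x s
          rw [hMdef] at habs
          linarith
        have hz : fderiv ℝ A (x + s • θ, y₃) = 0 := hfd0 (x + s • θ, y₃) hfar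
        have hzero : F' x s = 0 := by
          simp only [hF'def, hz, ContinuousLinearMap.zero_comp, ContinuousLinearMap.comp_zero]
        rw [hzero, norm_zero]
    · -- bound integrable
      exact ((integrableOn_const_iff).mpr (Or.inr measure_Icc_lt_top)).integrable_indicator
        measurableSet_Icc
    · exact Filter.Eventually.of_forall fun s x _ => hdiff s x
  have hgeq : (fun z => g z y₃) = fun z => ∫ s : ℝ, F z s := funext fun z => hg z y₃
  rw [hgeq]
  refine ⟨key.differentiableAt, ?_⟩
  rw [key.fderiv]
  -- the directional derivative along θ
  have hcurve : HasDerivAt (fun t : ℝ => y' + t • θ) θ 0 := by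
    simpa using ((hasDerivAt_id (0 : ℝ)).smul_const θ).const_add y'
  have hD : HasDerivAt (fun t : ℝ => ∫ s : ℝ, F (y' + t • θ) s) ((∫ s : ℝ, F' y' s) θ) 0 := by
    have hpt : y' + (0 : ℝ) • θ = y' := by simp
    have key' : HasFDerivAt (fun x => ∫ s : ℝ, F x s) (∫ s : ℝ, F' y' s)
        ((fun t : ℝ => y' + t • θ) 0) := by rw [show (fun t : ℝ => y' + t • θ) 0 = y' by simp]; exact key
    exact key'.comp_hasDerivAt 0 hcurve
  have hconst : (fun t : ℝ => ∫ s : ℝ, F (y' + t • θ) s) = fun _ => ∫ s : ℝ, F y' s := by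
    funext t
    have hshift : ∀ s : ℝ, F (y' + t • θ) s = F y' (s + t) := by
      intro s
      simp only [hFdef]
      congr 2
      rw [add_assoc, ← add_smul, add_comm t s]
    simp_rw [hshift]
    exact integral_add_right_eq_self (fun s => F y' s) t
  have hzero : HasDerivAt (fun t : ℝ => ∫ s : ℝ, F (y' + t • θ) s) 0 0 := by
    rw [hconst]; exact hasDerivAt_const _ _
  exact hD.unique hzero
end
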